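/- arXiv:0904.3239 — 8 statements merged into one kernel-verified Lean document; each statement's English description precedes it below -/
import Mathlib

section
/- (Tits 1964) If D = (X,B) is a non-trivial Steiner t-design with v points and block size k, then v ≥ (t+1)(k-t+1). -/
/-- **Tits 1964.** If `D = (X, B)` is a non-trivial Steiner
`t`-design with `v` points and block size `k`, then `v ≥ (t + 1) * (k - t + 1)`. -/
theorem stmt_5 (X : Type*) [Fintype X] [DecidableEq X]
    (v k t : ℕ) (B : Finset (Finset X))
    (hv : Fintype.card X = v) (htk : t < k) (hkv : k < v)
    (hblocks : ∀ b ∈ B, b.card = k)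
    (hdesign : ∀ S : Finset X, S.card = t → (B.filter (fun b => S ⊆ b)).card = 1) :
    v ≥ (t + 1) * (k - t + 1) := by
  classical
  -- unique block through each t-set
  have huniq : ∀ S : Finset X, S.card = t →
      ∃ b, b ∈ B ∧ S ⊆ b ∧ ∀ b' ∈ B, S ⊆ b' → b' = b := by
    intro S hS
    obtain ⟨b, hb⟩ := Finset.card_eq_one.mp (hdesign S hS)
    have hbmem : b ∈ B.filter (fun b => S ⊆ b) := hb ▸ Finset.mem_singleton_self b
    refine ⟨b, (Finset.mem_filter.mp hbmem).1, (Finset.mem_filter.mp hbmem).2, ?_⟩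
    intro b' hb' hSb'
    have : b' ∈ B.filter (fun b => S ⊆ b) := Finset.mem_filter.mpr ⟨hb', hSb'⟩
    simpa [hb] using this
  -- two distinct blocks meet in fewer than t points
  have hint : ∀ b ∈ B, ∀ b' ∈ B, b ≠ b' → (b ∩ b').card < t := by
    intro b hb b' hb' hne
    by_contra h
    push_neg at h
    obtain ⟨T, hTsub, hTcard⟩ := Finset.exists_subset_card_eq h
    obtain ⟨c, _, _, hc⟩ := huniq T hTcard
    exact hne ((hc b hb (hTsub.trans Finset.inter_subset_left)).trans
      (hc b' hb' (hTsub.trans Finset.inter_subset_right)).symm)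
  -- get a block b0 through a t-set S0
  have hcardX : Fintype.card X = v := hv
  obtain ⟨S0, _, hS0card⟩ := Finset.exists_subset_card_eq
    (show t ≤ (Finset.univ : Finset X).card by simp [hcardX]; omega)
  obtain ⟨b0, hb0B, hS0b0, hb0uniq⟩ := huniq S0 hS0card
  have hb0card : b0.card = k := hblocks b0 hb0B
  -- a point outside b0
  have : ∃ x, x ∉ b0 := by
    by_contra h
    push_neg at h
    have : (Finset.univ : Finset X) ⊆ b0 := fun x _ => h x
    have := Finset.card_le_card this
    simp [hcardX, hb0card] at this
    omega
  obtain ⟨x, hx⟩ := this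
  set E : Finset X := insert x S0 with hE
  have hxS0 : x ∉ S0 := fun h => hx (hS0b0 h)
  have hEcard : E.card = t + 1 := by
    rw [hE, Finset.card_insert_of_notMem hxS0, hS0card]
  have hSE : S0 ⊆ E := Finset.subset_insert _ _
  have hxE : x ∈ E := Finset.mem_insert_self _ _
  -- for each y ∈ E, the unique block through E.erase y
  have herase : ∀ y ∈ E, (E.erase y).card = t := by
    intro y hy
    rw [Finset.card_erase_of_mem hy, hEcard]
    omega
  -- choice of block
  have hblk : ∀ y ∈ E, ∃ b, b ∈ B ∧ E.erase y ⊆ b ∧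
      (∀ b' ∈ B, E.erase y ⊆ b' → b' = b) ∧ y ∉ b := by
    intro y hy
    obtain ⟨b, hbB, hsub, hun⟩ := huniq (E.erase y) (herase y hy)
    refine ⟨b, hbB, hsub, hun, ?_⟩
    intro hyb
    have hEb : E ⊆ b := by
      intro z hz
      rcases eq_or_ne z y with rfl | hne
      · exact hyb
      · exact hsub (Finset.mem_erase.mpr ⟨hne, hz⟩)
    have : b = b0 := hb0uniq b hbB (hSE.trans hEb)
    exact hx (this ▸ hEb hxE)
  choose! f hfB hfsub hfuniq hfnot using hblk
  -- the outside parts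
  set g : X → Finset X := fun y => f y \ E with hg
  have hcap : ∀ y ∈ E, f y ∩ E = E.erase y := by
    intro y hy
    apply Finset.Subset.antisymm
    · intro z hz
      rcases Finset.mem_inter.mp hz with ⟨hz1, hz2⟩
      exact Finset.mem_erase.mpr ⟨fun h => hfnot y hy (h ▸ hz1), hz2⟩
    · intro z hz
      exact Finset.mem_inter.mpr ⟨hfsub y hy hz, Finset.mem_of_mem_erase hz⟩
  have hgcard : ∀ y ∈ E, (g y).card = k - t := by
    intro y hy
    have h1 : (f y \ E).card + (f y ∩ E).card = (f y).card :=
      Finset.card_sdiff_add_card_inter _ _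
    rw [hcap y hy, herase y hy, hblocks _ (hfB y hy)] at h1
    simp only [hg]
    omega
  -- g y pieces are pairwise disjoint
  have hgdisj : ∀ y ∈ E, ∀ y' ∈ E, y ≠ y' → Disjoint (g y) (g y') := by
    intro y hy y' hy' hne
    have hfne : f y ≠ f y' := by
      intro h
      have : y' ∈ f y' := h ▸ hfsub y hy (Finset.mem_erase.mpr ⟨hne.symm, hy'⟩)
      exact hfnot y' hy' this
    rw [Finset.disjoint_left]
    intro z hz hz'
    have hzE : z ∉ E := (Finset.mem_sdiff.mp hz).2
    have hzf : z ∈ f y := (Finset.mem_sdiff.mp hz).1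
    have hzf' : z ∈ f y' := (Finset.mem_sdiff.mp hz').1
    -- insert z ((E.erase y).erase y') ⊆ f y ∩ f y' and has card t
    have hsub2 : insert z ((E.erase y).erase y') ⊆ f y ∩ f y' := by
      intro w hw
      rcases Finset.mem_insert.mp hw with rfl | hw
      · exact Finset.mem_inter.mpr ⟨hzf, hzf'⟩
      · refine Finset.mem_inter.mpr ⟨hfsub y hy (Finset.mem_of_mem_erase hw), ?_⟩
        apply hfsub y' hy'
        rcases Finset.mem_erase.mp hw with ⟨hwy', hw2⟩
        rcases Finset.mem_erase.mp hw2 with ⟨hwy, hwE⟩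
        exact Finset.mem_erase.mpr ⟨hwy', hwE⟩
    have hy'mem : y' ∈ E.erase y := Finset.mem_erase.mpr ⟨hne.symm, hy'⟩
    have hc2 : ((E.erase y).erase y').card = t - 1 := by
      rw [Finset.card_erase_of_mem hy'mem, herase y hy]
    have hznot : z ∉ (E.erase y).erase y' := fun h =>
      hzE (Finset.mem_of_mem_erase (Finset.mem_of_mem_erase h))
    have hc3 : (insert z ((E.erase y).erase y')).card = t := by
      rw [Finset.card_insert_of_notMem hznot, hc2]
      have h2 : ({y, y'} : Finset X) ⊆ E := by
        intro w hw
        rcases Finset.mem_insert.mp hw with rfl | hw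
        · exact hy
        · exact (Finset.mem_singleton.mp hw) ▸ hy'
      have := Finset.card_le_card h2
      rw [Finset.card_pair hne, hEcard] at this
      omega
    have := Finset.card_le_card hsub2
    rw [hc3] at this
    exact absurd (hint _ (hfB y hy) _ (hfB y' hy') hfne) (by omega)
  -- final count
  have hEgdisj : Disjoint E (E.biUnion g) := by
    rw [Finset.disjoint_right]
    intro z hz hzE
    obtain ⟨y, hy, hzg⟩ := Finset.mem_biUnion.mp hz
    exact (Finset.mem_sdiff.mp hzg).2 hzE
  have hbU : (E.biUnion g).card = (t + 1) * (k - t) := by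
    rw [Finset.card_biUnion hgdisj]
    rw [Finset.sum_congr rfl hgcard, Finset.sum_const, hEcard, smul_eq_mul]
  have hle : (E ∪ E.biUnion g).card ≤ v := by
    rw [← hcardX]
    exact Finset.card_le_univ _
  rw [Finset.card_union_of_disjoint hEgdisj, hEcard, hbU] at hle
  have : (t + 1) * (k - t + 1) = t + 1 + (t + 1) * (k - t) := by ring
  omega
end

section
/- (Cameron 1976) If D = (X,B) is a non-trivial Steiner t-design with t > 2, v points and block size k, then v - t + 1 ≥ (k-t+2)(k-t+1); and if equality holds, then (t,k,v) is one of (3,4,8), (3,6,22), (3,12,112), (4,7,23), (5,8,24). -/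
open Finset

lemma card_supersets {α : Type*} [DecidableEq α] (A S : Finset α) (hS : S ⊆ A) {m : ℕ}
    (hm : S.card ≤ m) :
    ((A.powersetCard m).filter (fun T => S ⊆ T)).card
      = (A.card - S.card).choose (m - S.card) := by
  rw [← card_sdiff_of_subset hS, ← Finset.card_powersetCard]
  apply Finset.card_bij (fun T _ => T \ S)
  · intro T hT
    simp only [mem_filter, mem_powersetCard] at hT
    rw [mem_powersetCard]
    exact ⟨sdiff_subset_sdiff hT.1.1 (Subset.refl S), by rw [card_sdiff_of_subset hT.2, hT.1.2]⟩
  · intro T₁ h₁ T₂ h₂ h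
    simp only [mem_filter, mem_powersetCard] at h₁ h₂
    rw [← sdiff_union_of_subset h₁.2, ← sdiff_union_of_subset h₂.2, h]
  · intro U hU
    rw [mem_powersetCard] at hU
    have hd : Disjoint U S := disjoint_of_subset_left hU.1 sdiff_disjoint
    refine ⟨U ∪ S, ?_, ?_⟩
    · simp only [mem_filter, mem_powersetCard]
      refine ⟨⟨union_subset (hU.1.trans (sdiff_subset)) hS, ?_⟩, subset_union_right⟩
      rw [card_union_of_disjoint hd, hU.2]
      omega
    · rw [union_sdiff_right, sdiff_eq_self_of_disjoint hd]

lemma count_blocks {X : Type*} [Fintype X] [DecidableEq X]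
    (v k t : ℕ) (B : Finset (Finset X))
    (hv : Fintype.card X = v)
    (hblocks : ∀ b ∈ B, b.card = k)
    (hdesign : ∀ S : Finset X, S.card = t → (B.filter (fun b => S ⊆ b)).card = 1)
    (S : Finset X) (hit : S.card ≤ t) :
    (B.filter (fun b => S ⊆ b)).card * (k - S.card).choose (t - S.card)
      = (v - S.card).choose (t - S.card) := by
  classical
  set 𝒯 := ((Finset.univ : Finset X).powersetCard t).filter (fun T => S ⊆ T) with h𝒯
  have h1 : ∑ T ∈ 𝒯, (B.filter (fun b => T ⊆ b)).card = 𝒯.card := by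
    rw [Finset.sum_congr rfl (fun T hT => hdesign T ?_)]
    · simp
    · simp only [h𝒯, mem_filter, mem_powersetCard] at hT
      exact hT.1.2
  have hcard𝒯 : 𝒯.card = (v - S.card).choose (t - S.card) := by
    rw [h𝒯, card_supersets _ S (subset_univ S) hit, card_univ, hv]
  have h2 : ∑ T ∈ 𝒯, (B.filter (fun b => T ⊆ b)).card
      = ∑ b ∈ B, (𝒯.filter (fun T => T ⊆ b)).card := by
    simp_rw [Finset.card_filter]
    exact Finset.sum_comm
  have h3 : ∀ b ∈ B, (𝒯.filter (fun T => T ⊆ b)).card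
      = if S ⊆ b then (k - S.card).choose (t - S.card) else 0 := by
    intro b hb
    by_cases hSb : S ⊆ b
    · rw [if_pos hSb]
      have he : 𝒯.filter (fun T => T ⊆ b) = (b.powersetCard t).filter (fun T => S ⊆ T) := by
        ext T
        simp only [h𝒯, mem_filter, mem_powersetCard, filter_filter, subset_univ, true_and]
        tauto
      rw [he, card_supersets b S hSb hit, hblocks b hb]
    · rw [if_neg hSb, Finset.card_eq_zero, Finset.filter_eq_empty_iff]
      intro T hT hTb
      simp only [h𝒯, mem_filter] at hT
      exact hSb (hT.2.trans hTb)
  have h4 : ∑ b ∈ B, (𝒯.filter (fun T => T ⊆ b)).card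
      = (B.filter (fun b => S ⊆ b)).card * (k - S.card).choose (t - S.card) := by
    rw [Finset.sum_congr rfl h3, ← Finset.sum_filter, Finset.sum_const, smul_eq_mul]
  rw [← h4, ← h2, h1, hcard𝒯]

lemma exists_lambda {X : Type*} [Fintype X] [DecidableEq X]
    (v k t : ℕ) (B : Finset (Finset X))
    (hv : Fintype.card X = v)
    (hblocks : ∀ b ∈ B, b.card = k)
    (hdesign : ∀ S : Finset X, S.card = t → (B.filter (fun b => S ⊆ b)).card = 1)
    (i : ℕ) (hit : i ≤ t) (htv : t ≤ v) :
    ∃ lam : ℕ, lam * (k - i).choose (t - i) = (v - i).choose (t - i) := by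
  obtain ⟨S, _, hScard⟩ := Finset.exists_subset_card_eq
    (show i ≤ (Finset.univ : Finset X).card by rw [card_univ, hv]; omega)
  refine ⟨(B.filter (fun b => S ⊆ b)).card, ?_⟩
  have := count_blocks v k t B hv hblocks hdesign S (hScard ▸ hit)
  rwa [hScard] at this

/-- **Cameron 1976.** If `D = (X, B)` is a non-trivial Steiner
`t`-design with `t > 2`, `v` points and block size `k`, then
`v - t + 1 ≥ (k - t + 2) * (k - t + 1)`; and if equality holds, then `(t, k, v)` is
one of `(3,4,8)`, `(3,6,22)`, `(3,12,112)`, `(4,7,23)`, `(5,8,24)`. -/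
theorem stmt_6 (X : Type*) [Fintype X] [DecidableEq X]
    (v k t : ℕ) (B : Finset (Finset X))
    (hv : Fintype.card X = v) (ht : 2 < t) (htk : t < k) (hkv : k < v)
    (hblocks : ∀ b ∈ B, b.card = k)
    (hdesign : ∀ S : Finset X, S.card = t → (B.filter (fun b => S ⊆ b)).card = 1) :
    v - t + 1 ≥ (k - t + 2) * (k - t + 1) ∧
      (v - t + 1 = (k - t + 2) * (k - t + 1) →
        (t, k, v) = (3, 4, 8) ∨ (t, k, v) = (3, 6, 22) ∨ (t, k, v) = (3, 12, 112) ∨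
          (t, k, v) = (4, 7, 23) ∨ (t, k, v) = (5, 8, 24)) := by
  classical
  have htv : t < v := lt_trans htk hkv
  -- ### Part 1: the inequality, via a derived-design counting argument
  obtain ⟨S₀, hS₀u, hS₀card⟩ := Finset.exists_subset_card_eq
    (show t - 2 ≤ (Finset.univ : Finset X).card by rw [card_univ, hv]; omega)
  obtain ⟨T₀, hST₀, _, hT₀card⟩ :=
    Finset.exists_subsuperset_card_eq (n := t) hS₀u (by omega) (by rw [card_univ, hv]; omega)
  have hT₀blk := hdesign T₀ hT₀card
  obtain ⟨b₀, hb₀⟩ := Finset.card_eq_one.mp hT₀blk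
  have hb₀mem : b₀ ∈ B.filter (fun b => T₀ ⊆ b) := by rw [hb₀]; exact mem_singleton_self _
  rw [mem_filter] at hb₀mem
  obtain ⟨hb₀B, hT₀b₀⟩ := hb₀mem
  have hS₀b₀ : S₀ ⊆ b₀ := hST₀.trans hT₀b₀
  have hb₀card : b₀.card = k := hblocks b₀ hb₀B
  obtain ⟨x, hx⟩ : ((Finset.univ : Finset X) \ b₀).Nonempty := by
    rw [← Finset.card_pos, card_sdiff_of_subset (subset_univ b₀), card_univ, hv, hb₀card]
    omega
  rw [mem_sdiff] at hx
  have hxb₀ : x ∉ b₀ := hx.2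
  have hxS₀ : x ∉ S₀ := fun h => hxb₀ (hS₀b₀ h)
  set S₁ : Finset X := insert x S₀ with hS₁
  have hS₁card : S₁.card = t - 1 := by
    rw [hS₁, card_insert_of_notMem hxS₀, hS₀card]; omega
  set r := (B.filter (fun b => S₁ ⊆ b)).card with hr_def
  have hr_eq : r * (k - (t - 1)) = v - (t - 1) := by
    have h := count_blocks v k t B hv hblocks hdesign S₁ (by omega)
    rw [hS₁card, show t - (t - 1) = 1 by omega, Nat.choose_one_right,
      Nat.choose_one_right] at h
    exact h
  -- the injection from points of b₀ \ S₀ into blocks through S₁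
  set f : X → Finset X := fun y =>
    if h : (B.filter (fun b => insert x (insert y S₀) ⊆ b)).Nonempty then h.choose else ∅
    with hf
  have hfprop : ∀ y ∈ b₀ \ S₀, f y ∈ B ∧ insert x (insert y S₀) ⊆ f y := by
    intro y hy
    rw [mem_sdiff] at hy
    have hxy : x ≠ y := fun h => hxb₀ (h ▸ hy.1)
    have hUcard : (insert x (insert y S₀)).card = t := by
      rw [card_insert_of_notMem (by simp [hxy, hxS₀]),
        card_insert_of_notMem hy.2, hS₀card]; omega
    have hne : (B.filter (fun b => insert x (insert y S₀) ⊆ b)).Nonempty := by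
      rw [← Finset.card_pos, hdesign _ hUcard]; omega
    have hspec := hne.choose_spec
    rw [mem_filter] at hspec
    simp only [hf, dif_pos hne]
    exact hspec
  have hinj : (b₀ \ S₀).card ≤ r := by
    apply Finset.card_le_card_of_injOn f
    · intro y hy
      obtain ⟨hfB, hfsub⟩ := hfprop y hy
      rw [mem_coe, mem_filter]
      refine ⟨hfB, ?_⟩
      exact (insert_subset_insert x (subset_insert y S₀)).trans hfsub
    · intro y₁ hy₁ y₂ hy₂ hfeq
      by_contra hne_y
      obtain ⟨hfB₁, hsub₁⟩ := hfprop y₁ hy₁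
      obtain ⟨hfB₂, hsub₂⟩ := hfprop y₂ hy₂
      rw [coe_sdiff] at hy₁ hy₂
      have hy₁' : y₁ ∈ b₀ \ S₀ := by simpa using hy₁
      have hy₂' : y₂ ∈ b₀ \ S₀ := by simpa using hy₂
      rw [mem_sdiff] at hy₁' hy₂'
      set W : Finset X := insert y₁ (insert y₂ S₀) with hW
      have hWcard : W.card = t := by
        rw [hW, card_insert_of_notMem (by simp [hne_y, hy₁'.2]),
          card_insert_of_notMem hy₂'.2, hS₀card]; omega
      have hWb : W ⊆ f y₁ := by
        rw [hW]
        apply insert_subset (hsub₁ (by simp))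
        apply insert_subset (hfeq ▸ hsub₂ (by simp))
        exact (subset_insert _ _).trans ((subset_insert _ _).trans hsub₁)
      have hWb₀ : W ⊆ b₀ := by
        rw [hW]
        exact insert_subset hy₁'.1 (insert_subset hy₂'.1 hS₀b₀)
      have hbne : f y₁ ≠ b₀ := by
        intro h
        exact hxb₀ (h ▸ hsub₁ (mem_insert_self _ _))
      have hpair : ({f y₁, b₀} : Finset (Finset X)) ⊆ B.filter (fun b => W ⊆ b) := by
        intro c hc
        rw [mem_insert, mem_singleton] at hc
        rw [mem_filter]
        rcases hc with rfl | rfl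
        · exact ⟨hfB₁, hWb⟩
        · exact ⟨hb₀B, hWb₀⟩
      have h2 : 2 ≤ (B.filter (fun b => W ⊆ b)).card := by
        calc 2 = ({f y₁, b₀} : Finset (Finset X)).card := by
                rw [card_insert_of_notMem (by simpa using hbne), card_singleton]
          _ ≤ _ := Finset.card_le_card hpair
      rw [hdesign W hWcard] at h2
      omega
  have hbS₀card : (b₀ \ S₀).card = k - (t - 2) := by
    rw [card_sdiff_of_subset hS₀b₀, hb₀card, hS₀card]
  have hrge : k - t + 2 ≤ r := by omega
  have hkt1 : k - (t - 1) = k - t + 1 := by omega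
  have hvt1 : v - (t - 1) = v - t + 1 := by omega
  rw [hkt1, hvt1] at hr_eq
  have hineq : (k - t + 2) * (k - t + 1) ≤ v - t + 1 := by
    calc (k - t + 2) * (k - t + 1) ≤ r * (k - t + 1) :=
          Nat.mul_le_mul_right _ hrge
      _ = v - t + 1 := hr_eq
  refine ⟨hineq, ?_⟩
  -- ### Part 2: the equality case
  intro heq
  obtain ⟨m, hm⟩ : ∃ m, k - t + 1 = m + 2 := ⟨k - t - 1, by omega⟩
  obtain ⟨M, hMdef⟩ : ∃ M : ℕ, M = m * m + 5 * m := ⟨_, rfl⟩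
  have hveq : v - t + 1 = M + 6 := by
    rw [heq, show k - t + 2 = m + 3 by omega, hm, hMdef]; ring
  -- the divisibility condition from λ_{t-3}
  obtain ⟨l₃, hl₃⟩ := exists_lambda v k t B hv hblocks hdesign (t - 3) (by omega) (by omega)
  rw [show t - (t - 3) = 3 by omega, show k - (t - 3) = m + 4 by omega,
    show v - (t - 3) = M + 8 by omega] at hl₃
  have desc3 : ∀ a : ℕ, (a + 2).descFactorial 3 = (a + 2) * (a + 1) * a := by
    intro a
    rw [Nat.descFactorial_succ, Nat.descFactorial_succ, Nat.descFactorial_succ,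
      Nat.descFactorial_zero, show a + 2 - 2 = a by omega, show a + 2 - 1 = a + 1 by omega,
      show a + 2 - 0 = a + 2 from rfl]
    ring
  have E1 : l₃ * ((m + 4).descFactorial 3) = (M + 8).descFactorial 3 := by
    rw [Nat.descFactorial_eq_factorial_mul_choose, Nat.descFactorial_eq_factorial_mul_choose,
      ← hl₃]
    ring
  rw [show m + 4 = (m + 2) + 2 from rfl, desc3, show M + 8 = (M + 6) + 2 from rfl, desc3] at E1
  have hM6 : M + 6 = (m + 3) * (m + 2) := by rw [hMdef]; ring
  have key : l₃ * (m + 4) = (M + 8) * (M + 7) := by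
    apply Nat.eq_of_mul_eq_mul_right (show 0 < (m + 3) * (m + 2) by positivity)
    calc l₃ * (m + 4) * ((m + 3) * (m + 2))
        = l₃ * ((m + 2 + 2) * (m + 2 + 1) * (m + 2)) := by ring
      _ = (M + 6 + 2) * (M + 6 + 1) * (M + 6) := E1
      _ = (M + 8) * (M + 7) * ((m + 3) * (m + 2)) := by rw [hMdef]; ring
  have hidd : (M + 8) * (M + 7)
      = (m + 4) * ((m + 4) * (m + 1) * (m + 1) + 7 * (m + 1)) + 12 := by
    rw [hMdef]; ring
  have hdvd : (m + 4) ∣ 12 := by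
    have hdd : (m + 4) ∣ (m + 4) * ((m + 4) * (m + 1) * (m + 1) + 7 * (m + 1)) + 12 := by
      rw [← hidd, ← key]
      exact dvd_mul_left _ _
    exact (Nat.dvd_add_right (dvd_mul_right _ _)).mp hdd
  have hm12 : m + 4 ≤ 12 := Nat.le_of_dvd (by norm_num) hdvd
  have hm8 : m ≤ 8 := by omega
  -- helper to produce the λ_i divisibility equation for a given gap j
  have lam_eq : ∀ j : ℕ, j ≤ t →
      ∃ lam : ℕ, lam * (k - (t - j)).choose j = (v - (t - j)).choose j := by
    intro j hj
    obtain ⟨lam, hlam⟩ := exists_lambda v k t B hv hblocks hdesign (t - j) (by omega) (by omega)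
    rw [show t - (t - j) = j by omega] at hlam
    exact ⟨lam, hlam⟩
  interval_cases m
  · -- m = 0 : n = 2, k = t + 1, v = t + 5
    have hk : k = t + 1 := by omega
    have hvv : v = t + 5 := by simp [hMdef] at hveq; omega
    rcases (show t = 3 ∨ 4 ≤ t by omega) with rfl | ht4
    · left; simp [hk, hvv]
    · exfalso
      obtain ⟨l₄, hl₄⟩ := lam_eq 4 (by omega)
      rw [show k - (t - 4) = 5 by omega, show v - (t - 4) = 9 by omega,
        show Nat.choose 5 4 = 5 from by decide, show Nat.choose 9 4 = 126 from by decide] at hl₄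
      omega
  · exact absurd hdvd (by decide)
  · -- m = 2 : n = 4, k = t + 3, v = t + 19
    have hk : k = t + 3 := by omega
    have hvv : v = t + 19 := by simp [hMdef] at hveq; omega
    rcases (show t = 3 ∨ t = 4 ∨ t = 5 ∨ 6 ≤ t by omega) with rfl | rfl | rfl | ht6
    · right; left; simp [hk, hvv]
    · right; right; right; left; simp [hk, hvv]
    · right; right; right; right; simp [hk, hvv]
    · exfalso
      obtain ⟨l₆, hl₆⟩ := lam_eq 6 (by omega)
      rw [show k - (t - 6) = 9 by omega, show v - (t - 6) = 25 by omega,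
        show Nat.choose 9 6 = 84 from by decide, show Nat.choose 25 6 = 177100 from by decide]
        at hl₆
      omega
  · exact absurd hdvd (by decide)
  · exact absurd hdvd (by decide)
  · exact absurd hdvd (by decide)
  · exact absurd hdvd (by decide)
  · exact absurd hdvd (by decide)
  · -- m = 8 : n = 10, k = t + 9, v = t + 109
    have hk : k = t + 9 := by omega
    have hvv : v = t + 109 := by simp [hMdef] at hveq; omega
    rcases (show t = 3 ∨ 4 ≤ t by omega) with rfl | ht4
    · right; right; left; simp [hk, hvv]
    · exfalso
      obtain ⟨l₄, hl₄⟩ := lam_eq 4 (by omega)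
      rw [show k - (t - 4) = 13 by omega, show v - (t - 4) = 113 by omega,
        show Nat.choose 13 4 = 715 from by decide,
        show Nat.choose 113 4 = 6438740 from by decide] at hl₄
      omega
end

section
/- If D = (X,B) is a non-trivial Steiner 6-design with v points and block size k, then k ≤ ⌊√(v - 19/4) + 9/2⌋ (equivalently, v ≥ k² - 9k + 25). -/
/-- If `D = (X, B)` is a non-trivial Steiner `6`-design with `v`
points and block size `k`, then `k ≤ ⌊√(v - 19/4) + 9/2⌋`. -/
theorem stmt_7 (X : Type*) [Fintype X] [DecidableEq X]
    (v k : ℕ) (B : Finset (Finset X))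
    (hv : Fintype.card X = v) (htk : 6 < k) (hkv : k < v)
    (hblocks : ∀ b ∈ B, b.card = k)
    (hdesign : ∀ S : Finset X, S.card = 6 → (B.filter (fun b => S ⊆ b)).card = 1) :
    (k : ℤ) ≤ ⌊Real.sqrt ((v : ℝ) - 19 / 4) + 9 / 2⌋ := by
  classical
  have huniq : ∀ S : Finset X, S.card = 6 → ∀ b₁ ∈ B, ∀ b₂ ∈ B, S ⊆ b₁ → S ⊆ b₂ → b₁ = b₂ := by
    intro S hS b₁ hb₁ b₂ hb₂ h₁ h₂
    exact Finset.card_le_one.mp (hdesign S hS).le _ (Finset.mem_filter.mpr ⟨hb₁, h₁⟩)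
      _ (Finset.mem_filter.mpr ⟨hb₂, h₂⟩)
  have hv6 : 6 ≤ Fintype.card X := by omega
  obtain ⟨S₀, _, hS₀⟩ := Finset.exists_subset_card_eq (s := (Finset.univ : Finset X)) (n := 6)
    (by simpa using hv6)
  obtain ⟨b₀, hb₀⟩ := Finset.card_eq_one.mp (hdesign S₀ hS₀)
  have hb₀' : b₀ ∈ B.filter (fun b => S₀ ⊆ b) := by rw [hb₀]; simp
  obtain ⟨hb₀B, hS₀b₀⟩ := Finset.mem_filter.mp hb₀'
  have hb₀k : b₀.card = k := hblocks _ hb₀B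
  obtain ⟨T, hTS₀, hT4⟩ := Finset.exists_subset_card_eq (s := S₀) (n := 4) (by omega)
  have hTb₀ : T ⊆ b₀ := hTS₀.trans hS₀b₀
  have hpne : (Finset.univ \ b₀).Nonempty := by
    rw [← Finset.card_pos, Finset.card_sdiff_of_subset (Finset.subset_univ _)]
    simp only [Finset.card_univ, hv, hb₀k]
    omega
  obtain ⟨p, hp⟩ := hpne
  have hpb₀ : p ∉ b₀ := (Finset.mem_sdiff.mp hp).2
  set Tp := insert p T with hTpdef
  have hpT : p ∉ T := fun h => hpb₀ (hTb₀ h)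
  have hTp5 : Tp.card = 5 := by rw [Finset.card_insert_of_notMem hpT, hT4]
  set F := B.filter (fun b' => Tp ⊆ b') with hFdef
  have hkey : ∀ y ∈ (Finset.univ \ Tp : Finset X),
      (F.filter (fun b' => y ∈ b')).card = 1 := by
    intro y hy
    have hyTp : y ∉ Tp := (Finset.mem_sdiff.mp hy).2
    have heq : F.filter (fun b' => y ∈ b') = B.filter (fun b' => insert y Tp ⊆ b') := by
      rw [hFdef, Finset.filter_filter]
      apply Finset.filter_congr
      intro b' _
      simp only [Finset.insert_subset_iff]
      tauto
    rw [heq]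
    exact hdesign _ (by rw [Finset.card_insert_of_notMem hyTp, hTp5])
  have hsum : ∑ b' ∈ F, (b' \ Tp).card = v - 5 := by
    have h1 : ∀ b' : Finset X, b' \ Tp = (Finset.univ \ Tp).filter (fun y => y ∈ b') := by
      intro b'; ext y
      simp only [Finset.mem_sdiff, Finset.mem_filter, Finset.mem_univ, true_and]
      tauto
    calc ∑ b' ∈ F, (b' \ Tp).card
        = ∑ b' ∈ F, ∑ y ∈ Finset.univ \ Tp, (if y ∈ b' then 1 else 0) := by
          refine Finset.sum_congr rfl fun b' _ => ?_
          rw [h1 b', Finset.card_filter]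
      _ = ∑ y ∈ Finset.univ \ Tp, ∑ b' ∈ F, (if y ∈ b' then 1 else 0) := Finset.sum_comm
      _ = ∑ y ∈ Finset.univ \ Tp, (F.filter (fun b' => y ∈ b')).card := by
          refine Finset.sum_congr rfl fun y _ => ?_
          rw [Finset.card_filter]
      _ = ∑ _y ∈ Finset.univ \ Tp, 1 := Finset.sum_congr rfl hkey
      _ = (Finset.univ \ Tp).card := by simp
      _ = v - 5 := by
          rw [Finset.card_sdiff_of_subset (Finset.subset_univ _), hTp5, Finset.card_univ, hv]
  have hterm : ∀ b' ∈ F, (b' \ Tp).card = k - 5 := by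
    intro b' hb'
    obtain ⟨hb'B, hsub⟩ := Finset.mem_filter.mp hb'
    rw [Finset.card_sdiff_of_subset hsub, hblocks _ hb'B, hTp5]
  have hcount : F.card * (k - 5) = v - 5 := by
    rw [← hsum, Finset.sum_congr rfl hterm, Finset.sum_const, smul_eq_mul]
  -- injection from b₀ \ T into F
  have hinj : (b₀ \ T).card ≤ F.card := by
    set f : X → Finset X := fun x =>
      if h : ∃ c ∈ F, insert x Tp ⊆ c then h.choose else ∅ with hfdef
    have hmap : ∀ x ∈ b₀ \ T, f x ∈ F ∧ insert x Tp ⊆ f x := by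
      intro x hx
      obtain ⟨hxb₀, hxT⟩ := Finset.mem_sdiff.mp hx
      have hxTp : x ∉ Tp := by
        simp only [hTpdef, Finset.mem_insert]
        push_neg
        exact ⟨fun h => hpb₀ (h ▸ hxb₀), hxT⟩
      have h6 : (insert x Tp).card = 6 := by
        rw [Finset.card_insert_of_notMem hxTp, hTp5]
      obtain ⟨c, hc⟩ := Finset.card_eq_one.mp (hdesign _ h6)
      have hcmem : c ∈ B.filter (fun b => insert x Tp ⊆ b) := by rw [hc]; simp
      obtain ⟨hcB, hcsub⟩ := Finset.mem_filter.mp hcmem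
      have hex : ∃ c ∈ F, insert x Tp ⊆ c :=
        ⟨c, Finset.mem_filter.mpr ⟨hcB, (Finset.subset_insert _ _).trans hcsub⟩, hcsub⟩
      rw [hfdef]
      simp only [dif_pos hex]
      exact hex.choose_spec
    apply Finset.card_le_card_of_injOn f (fun x hx => (hmap x hx).1)
    intro x hx y hy hfxy
    by_contra hne
    obtain ⟨hxb₀, hxT⟩ := Finset.mem_sdiff.mp hx
    obtain ⟨hyb₀, hyT⟩ := Finset.mem_sdiff.mp hy
    have hx' := hmap x hx
    have hy' := hmap y hy
    set c := f x with hc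
    have hcB : c ∈ B := (Finset.mem_filter.mp hx'.1).1
    have hxc : x ∈ c := hx'.2 (Finset.mem_insert_self _ _)
    have hyc : y ∈ c := by rw [hfxy]; exact hy'.2 (Finset.mem_insert_self _ _)
    have hTc : T ⊆ c := fun z hz => hx'.2 (Finset.mem_insert_of_mem (Finset.mem_insert_of_mem hz))
    have hpc : p ∈ c := hx'.2 (Finset.mem_insert_of_mem (Finset.mem_insert_self _ _))
    have hS'card : (insert x (insert y T)).card = 6 := by
      rw [Finset.card_insert_of_notMem (by simp [hxT, hne] : x ∉ insert y T),
        Finset.card_insert_of_notMem hyT, hT4]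
    have hS'b₀ : insert x (insert y T) ⊆ b₀ := by
      intro z hz
      rcases Finset.mem_insert.mp hz with h | hz
      · exact h ▸ hxb₀
      · rcases Finset.mem_insert.mp hz with h | hz
        · exact h ▸ hyb₀
        · exact hTb₀ hz
    have hS'c : insert x (insert y T) ⊆ c := by
      intro z hz
      rcases Finset.mem_insert.mp hz with h | hz
      · exact h ▸ hxc
      · rcases Finset.mem_insert.mp hz with h | hz
        · exact h ▸ hyc
        · exact hTc hz
    have : c = b₀ := huniq _ hS'card _ hcB _ hb₀B hS'c hS'b₀
    exact hpb₀ (this ▸ hpc)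
  have hcard : (b₀ \ T).card = k - 4 := by
    rw [Finset.card_sdiff_of_subset hTb₀, hb₀k, hT4]
  -- numeric conclusion: v ≥ k^2 - 9k + 25
  have hmul : (k - 4) * (k - 5) ≤ v - 5 := by
    rw [← hcount]
    exact Nat.mul_le_mul_right _ (hcard ▸ hinj)
  have hnat : (k - 4) * (k - 5) + 5 ≤ v := by
    have h5v : 5 ≤ v := by omega
    omega
  have hreal : ((k : ℝ) - 4) * ((k : ℝ) - 5) + 5 ≤ (v : ℝ) := by
    have := (Nat.cast_le (α := ℝ)).mpr hnat
    push_cast [Nat.cast_sub (by omega : 4 ≤ k), Nat.cast_sub (by omega : 5 ≤ k)] at this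
    linarith
  rw [Int.le_floor]
  push_cast
  have hsqrt : (k : ℝ) - 9 / 2 ≤ Real.sqrt ((v : ℝ) - 19 / 4) := by
    rw [show ((k : ℝ) - 9 / 2) = Real.sqrt (((k : ℝ) - 9 / 2) ^ 2) from
      (Real.sqrt_sq (by
        have : (7 : ℝ) ≤ (k : ℝ) := by exact_mod_cast htk
        linarith)).symm]
    apply Real.sqrt_le_sqrt
    nlinarith
  linarith
end

section
/- (Block 1965) Let D = (X,B) be a t-(v,k,λ) design with t ≥ 2 and k < v. If a group G of automorphisms of D acts transitively on the blocks of D, then G acts transitively on the points of D. -/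
lemma Lsub {α : Type*} [DecidableEq α] (S U : Finset α) (hSU : S ⊆ U) (n : ℕ) (hn : S.card ≤ n) :
    ((U.powersetCard n).filter (fun T => S ⊆ T)).card = (U.card - S.card).choose (n - S.card) := by
  rw [show U.card - S.card = (U \ S).card from (Finset.card_sdiff_of_subset hSU).symm,
    ← Finset.card_powersetCard (n - S.card) (U \ S)]
  apply Finset.card_bij' (fun T _ => T \ S) (fun T _ => T ∪ S)
  · intro T hT
    simp only [Finset.mem_filter, Finset.mem_powersetCard] at hT
    simp only [Finset.mem_powersetCard]
    refine ⟨Finset.sdiff_subset_sdiff hT.1.1 le_rfl, ?_⟩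
    rw [Finset.card_sdiff_of_subset hT.2, hT.1.2]
  · intro T hT
    simp only [Finset.mem_powersetCard] at hT
    simp only [Finset.mem_filter, Finset.mem_powersetCard]
    have h1 : T ∪ S ⊆ U := Finset.union_subset (hT.1.trans (Finset.sdiff_subset)) hSU
    have hd : Disjoint T S := ((Finset.sdiff_disjoint).mono_left hT.1)
    refine ⟨⟨h1, ?_⟩, Finset.subset_union_right⟩
    rw [Finset.card_union_of_disjoint hd, hT.2]
    omega
  · intro T hT
    simp only [Finset.mem_filter, Finset.mem_powersetCard] at hT
    exact Finset.sdiff_union_of_subset hT.2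
  · intro T hT
    simp only [Finset.mem_powersetCard] at hT
    exact Finset.union_sdiff_cancel_right ((Finset.sdiff_disjoint).mono_left hT.1)


-- generic double counting: sum of "blocks containing T" over T in 𝒯 equals
-- sum over blocks of "T's contained in b"
lemma swapcount {α : Type*} [DecidableEq α] (𝒯 B : Finset (Finset α)) :
    ∑ T ∈ 𝒯, (B.filter (fun b => T ⊆ b)).card
      = ∑ b ∈ B, (𝒯.filter (fun T => T ⊆ b)).card := by
  simp only [Finset.card_filter]
  exact Finset.sum_comm

-- replication lemma
lemma repl {X : Type*} [Fintype X] [DecidableEq X]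
    (v k t lam : ℕ) (B : Finset (Finset X))
    (hv : Fintype.card X = v) (htk : t ≤ k)
    (hblocks : ∀ b ∈ B, b.card = k)
    (hdesign : ∀ S : Finset X, S.card = t → (B.filter (fun b => S ⊆ b)).card = lam)
    (S : Finset X) (s : ℕ) (hS : S.card = s) (hst : s ≤ t) :
    (B.filter (fun b => S ⊆ b)).card * (k - s).choose (t - s)
      = lam * (v - s).choose (t - s) := by
  have key := swapcount ((Finset.univ.powersetCard t).filter (fun T => S ⊆ T)) B
  -- LHS of key
  have hL : ∑ T ∈ (Finset.univ.powersetCard t).filter (fun T => S ⊆ T),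
      (B.filter (fun b => T ⊆ b)).card = (v - s).choose (t - s) * lam := by
    rw [Finset.sum_congr rfl (fun T hT => ?_), Finset.sum_const, smul_eq_mul,
      Lsub S Finset.univ (Finset.subset_univ S) t (hS ▸ hst), hS, Finset.card_univ, hv]
    simp only [Finset.mem_filter, Finset.mem_powersetCard] at hT
    exact hdesign T hT.1.2
  -- RHS of key
  have hR : ∑ b ∈ B, (((Finset.univ.powersetCard t).filter (fun T => S ⊆ T)).filter
      (fun T => T ⊆ b)).card = (B.filter (fun b => S ⊆ b)).card * (k - s).choose (t - s) := by
    have step : ∀ b ∈ B, (((Finset.univ.powersetCard t).filter (fun T => S ⊆ T)).filter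
        (fun T => T ⊆ b)).card = if S ⊆ b then (k - s).choose (t - s) else 0 := by
      intro b hb
      rw [Finset.filter_filter]
      by_cases hSb : S ⊆ b
      · have he : (Finset.univ.powersetCard t).filter (fun T => S ⊆ T ∧ T ⊆ b)
            = (b.powersetCard t).filter (fun T => S ⊆ T) := by
          ext T
          simp only [Finset.mem_filter, Finset.mem_powersetCard, Finset.subset_univ,
            true_and]
          tauto
        rw [he, Lsub S b hSb t (hS ▸ hst), hblocks b hb, hS, if_pos hSb]
      · have he : (Finset.univ.powersetCard t).filter (fun T => S ⊆ T ∧ T ⊆ b)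
            = ∅ := by
          rw [Finset.filter_eq_empty_iff]
          intro T _ ⟨h1, h2⟩
          exact hSb (h1.trans h2)
        rw [he, if_neg hSb]
        simp
    rw [Finset.sum_congr rfl step, ← Finset.sum_filter, Finset.sum_const, smul_eq_mul]
  rw [hL, hR] at key
  rw [← key]; ring


lemma count1 {X : Type*} [DecidableEq X] (B : Finset (Finset X)) (O : Finset X) :
    ∑ x ∈ O, (B.filter (fun b => ({x} : Finset X) ⊆ b)).card = ∑ b ∈ B, (b ∩ O).card := by
  simp only [Finset.singleton_subset_iff, Finset.card_filter]
  rw [Finset.sum_comm]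
  refine Finset.sum_congr rfl fun b _ => ?_
  rw [← Finset.card_filter, Finset.filter_mem_eq_inter, Finset.inter_comm]

lemma count2 {X : Type*} [DecidableEq X] (B : Finset (Finset X)) (O : Finset X) :
    ∑ P ∈ O.powersetCard 2, (B.filter (fun b => P ⊆ b)).card
      = ∑ b ∈ B, ((b ∩ O).powersetCard 2).card := by
  rw [swapcount]
  refine Finset.sum_congr rfl fun b _ => ?_
  congr 1
  ext T
  simp only [Finset.mem_filter, Finset.mem_powersetCard, Finset.subset_inter_iff]
  tauto

lemma two_choose (n : ℕ) : n.choose 2 * 2 = n * (n - 1) := by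
  rcases n with _ | n
  · simp
  · rw [Nat.choose_two_right, Nat.succ_sub_one,
      Nat.div_mul_cancel (by rw [mul_comm]; exact (Nat.even_mul_succ_self n).two_dvd)]

lemma arith (v k w m : ℕ) (hkv : k < v) (hk : 1 ≤ k) (hw : 1 ≤ w) (hm : 1 ≤ m)
    (h1 : m * v = k * w)
    (h2 : (m * (m - 1)) * (v * (v - 1)) = (k * (k - 1)) * (w * (w - 1))) : w = v := by
  have hv1 : 1 ≤ v := by omega
  zify at h1
  zify [hm, hk, hw, hv1] at h2
  have e : ((m : ℤ) * v) * (((m : ℤ) - 1) * ((v : ℤ) - 1))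
      = ((m : ℤ) * v) * (((k : ℤ) - 1) * ((w : ℤ) - 1)) := by
    calc ((m : ℤ) * v) * (((m : ℤ) - 1) * ((v : ℤ) - 1))
        = ((m : ℤ) * ((m : ℤ) - 1)) * ((v : ℤ) * ((v : ℤ) - 1)) := by ring
      _ = ((k : ℤ) * ((k : ℤ) - 1)) * ((w : ℤ) * ((w : ℤ) - 1)) := h2
      _ = ((k : ℤ) * w) * (((k : ℤ) - 1) * ((w : ℤ) - 1)) := by ring
      _ = ((m : ℤ) * v) * (((k : ℤ) - 1) * ((w : ℤ) - 1)) := by rw [h1]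
  have hmvpos : ((m : ℤ) * v) ≠ 0 := by positivity
  have e2 := mul_left_cancel₀ hmvpos e
  have hsum : (m : ℤ) + v = k + w := by linear_combination h1 - e2
  have hfac : ((v : ℤ) - w) * ((v : ℤ) - k) = 0 := by linear_combination (v : ℤ) * hsum - h1
  rcases mul_eq_zero.mp hfac with h | h
  · omega
  · omega
/-- **Block 1965.** Let `D = (X, B)` be a `t`-`(v, k, λ)` design with
`t ≥ 2` and `k < v`. If a group `G` of automorphisms of `D` acts transitively on
the blocks of `D`, then `G` acts transitively on the points of `D`. -/
theorem stmt_8 (X : Type*) [Fintype X] [DecidableEq X]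
    (v k t lam : ℕ) (B : Finset (Finset X))
    (hv : Fintype.card X = v) (ht : 2 ≤ t) (htk : t ≤ k) (hkv : k < v) (hlam : 1 ≤ lam)
    (hblocks : ∀ b ∈ B, b.card = k)
    (hdesign : ∀ S : Finset X, S.card = t → (B.filter (fun b => S ⊆ b)).card = lam)
    (G : Subgroup (Equiv.Perm X))
    (hAut : ∀ g ∈ G, ∀ b ∈ B, b.image g ∈ B)
    (hblocktrans : ∀ b₁ ∈ B, ∀ b₂ ∈ B, ∃ g ∈ G, b₁.image g = b₂) :
    ∀ x y : X, ∃ g ∈ G, g x = y := by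
  intro x y
  classical
  set O : Finset X := Finset.univ.filter (fun z => ∃ g ∈ G, g x = z) with hO
  suffices hy : y ∈ O by
    simpa [hO] using hy
  have hxO : x ∈ O := by
    simp only [hO, Finset.mem_filter, Finset.mem_univ, true_and]
    exact ⟨1, G.one_mem, rfl⟩
  have hinv : ∀ g ∈ G, O.image (g : Equiv.Perm X) = O := by
    intro g hg
    apply Finset.eq_of_subset_of_card_le
    · intro z hz
      simp only [hO, Finset.mem_image, Finset.mem_filter, Finset.mem_univ, true_and] at hz ⊢
      obtain ⟨u, ⟨h, hh, rfl⟩, rfl⟩ := hz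
      exact ⟨g * h, G.mul_mem hg hh, rfl⟩
    · rw [Finset.card_image_of_injective _ (g : Equiv.Perm X).injective]
  have hkpos : 1 ≤ k := le_trans (by omega) htk
  obtain ⟨T0, hT0sub, hT0card⟩ := Finset.exists_subset_card_eq
    (show t ≤ (Finset.univ : Finset X).card by rw [Finset.card_univ, hv]; omega)
  have hBne : B.Nonempty := by
    have h1 := hdesign T0 hT0card
    have h2 : (B.filter (fun b => T0 ⊆ b)).Nonempty := Finset.card_pos.mp (by omega)
    obtain ⟨b, hb⟩ := h2
    exact ⟨b, (Finset.mem_filter.mp hb).1⟩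
  obtain ⟨b0, hb0⟩ := hBne
  set N := B.card with hNdef
  have hN : 1 ≤ N := Finset.card_pos.mpr ⟨b0, hb0⟩
  set m := (b0 ∩ O).card with hmdef
  set w := O.card with hwdef
  have hmconst : ∀ b ∈ B, (b ∩ O).card = m := by
    intro b hb
    obtain ⟨g, hg, himg⟩ := hblocktrans b0 hb0 b hb
    have him : (b0 ∩ O).image (g : Equiv.Perm X) = b ∩ O := by
      rw [Finset.image_inter _ _ (g : Equiv.Perm X).injective, himg, hinv g hg]
    rw [← him, Finset.card_image_of_injective _ (g : Equiv.Perm X).injective]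
  set c1 := (k - 1).choose (t - 1) with hc1def
  set a1 := lam * (v - 1).choose (t - 1) with ha1def
  have hr1 : ∀ z : X, (B.filter (fun b => ({z} : Finset X) ⊆ b)).card * c1 = a1 :=
    fun z => repl v k t lam B hv htk hblocks hdesign {z} 1 (Finset.card_singleton z) (by omega)
  set c2 := (k - 2).choose (t - 2) with hc2def
  set a2 := lam * (v - 2).choose (t - 2) with ha2def
  have hr2 : ∀ P : Finset X, P.card = 2 → (B.filter (fun b => P ⊆ b)).card * c2 = a2 :=
    fun P hP => repl v k t lam B hv htk hblocks hdesign P 2 hP ht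
  have hc1 : 0 < c1 := Nat.choose_pos (by omega)
  have hc2 : 0 < c2 := Nat.choose_pos (by omega)
  have ha1 : 0 < a1 := Nat.mul_pos hlam (Nat.choose_pos (by omega))
  have ha2 : 0 < a2 := Nat.mul_pos hlam (Nat.choose_pos (by omega))
  -- counting lemmas applied to O and to univ
  have e1gen : ∀ (S : Finset X) (mS : ℕ), (∀ b ∈ B, (b ∩ S).card = mS) →
      N * mS * c1 = S.card * a1 := by
    intro S mS hms
    calc N * mS * c1 = (∑ b ∈ B, (b ∩ S).card) * c1 := by
          rw [Finset.sum_congr rfl hms, Finset.sum_const, smul_eq_mul]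
      _ = (∑ z ∈ S, (B.filter (fun b => ({z} : Finset X) ⊆ b)).card) * c1 := by
          rw [count1]
      _ = ∑ z ∈ S, (B.filter (fun b => ({z} : Finset X) ⊆ b)).card * c1 := by
          rw [Finset.sum_mul]
      _ = ∑ _z ∈ S, a1 := Finset.sum_congr rfl fun z _ => hr1 z
      _ = S.card * a1 := by rw [Finset.sum_const, smul_eq_mul]
  have e2gen : ∀ (S : Finset X) (mS : ℕ), (∀ b ∈ B, (b ∩ S).card = mS) →
      N * mS.choose 2 * c2 = S.card.choose 2 * a2 := by
    intro S mS hms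
    calc N * mS.choose 2 * c2 = (∑ b ∈ B, ((b ∩ S).powersetCard 2).card) * c2 := by
          rw [Finset.sum_congr rfl (fun b hb => by
            rw [Finset.card_powersetCard, hms b hb]), Finset.sum_const, smul_eq_mul]
      _ = (∑ P ∈ S.powersetCard 2, (B.filter (fun b => P ⊆ b)).card) * c2 := by
          rw [count2]
      _ = ∑ P ∈ S.powersetCard 2, (B.filter (fun b => P ⊆ b)).card * c2 := by
          rw [Finset.sum_mul]
      _ = ∑ P ∈ S.powersetCard 2, a2 := Finset.sum_congr rfl fun P hP =>
          hr2 P (Finset.mem_powersetCard.mp hP).2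
      _ = S.card.choose 2 * a2 := by
          rw [Finset.sum_const, smul_eq_mul, Finset.card_powersetCard]
  have e1O : N * m * c1 = w * a1 := e1gen O m hmconst
  have e1U : N * k * c1 = v * a1 := by
    have := e1gen Finset.univ k (fun b hb => by rw [Finset.inter_univ]; exact hblocks b hb)
    rwa [Finset.card_univ, hv] at this
  have e2O : N * m.choose 2 * c2 = w.choose 2 * a2 := e2gen O m hmconst
  have e2U : N * k.choose 2 * c2 = v.choose 2 * a2 := by
    have := e2gen Finset.univ k (fun b hb => by rw [Finset.inter_univ]; exact hblocks b hb)
    rwa [Finset.card_univ, hv] at this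
  have hw : 1 ≤ w := Finset.card_pos.mpr ⟨x, hxO⟩
  have hm1 : 1 ≤ m := by
    rcases Nat.eq_zero_or_pos m with hm0 | hm0
    · rw [hm0, Nat.mul_zero, Nat.zero_mul] at e1O
      exact absurd e1O.symm (Nat.ne_of_gt (Nat.mul_pos (by omega) ha1))
    · exact hm0
  have hmain1 : m * v = k * w := by
    have h : (m * v) * (N * c1 * a1) = (k * w) * (N * c1 * a1) := by
      calc (m * v) * (N * c1 * a1) = (N * m * c1) * (v * a1) := by ring
        _ = (w * a1) * (N * k * c1) := by rw [e1O, e1U]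
        _ = (k * w) * (N * c1 * a1) := by ring
    exact Nat.eq_of_mul_eq_mul_right (by positivity) h
  have hmain2 : m.choose 2 * v.choose 2 = k.choose 2 * w.choose 2 := by
    have h : (m.choose 2 * v.choose 2) * (N * c2 * a2)
        = (k.choose 2 * w.choose 2) * (N * c2 * a2) := by
      calc (m.choose 2 * v.choose 2) * (N * c2 * a2)
          = (N * m.choose 2 * c2) * (v.choose 2 * a2) := by ring
        _ = (w.choose 2 * a2) * (N * k.choose 2 * c2) := by rw [e2O, e2U]
        _ = (k.choose 2 * w.choose 2) * (N * c2 * a2) := by ring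
    exact Nat.eq_of_mul_eq_mul_right (by positivity) h
  have hmain2' : (m * (m - 1)) * (v * (v - 1)) = (k * (k - 1)) * (w * (w - 1)) := by
    calc (m * (m - 1)) * (v * (v - 1)) = (m.choose 2 * 2) * (v.choose 2 * 2) := by
          rw [two_choose, two_choose]
      _ = (m.choose 2 * v.choose 2) * 4 := by ring
      _ = (k.choose 2 * w.choose 2) * 4 := by rw [hmain2]
      _ = (k.choose 2 * 2) * (w.choose 2 * 2) := by ring
      _ = (k * (k - 1)) * (w * (w - 1)) := by rw [two_choose, two_choose]
  have hwv : w = v := arith v k w m hkv hkpos hw hm1 hmain1 hmain2'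
  have hOuniv : O = Finset.univ :=
    Finset.eq_univ_of_card O (by rw [← hwdef, hwv, hv])
  rw [hOuniv]
  exact Finset.mem_univ y
end

section
/- Let D = (X,B) be a t-(v,k,λ) design with t ≥ 3 and t < k < v. If a group G of automorphisms of D acts transitively on the flags of D, then G acts 2-transitively on the points of D. -/
lemma count_supersets {α : Type*} [DecidableEq α] (b S : Finset α) (hS : S ⊆ b) (t : ℕ)
    (hst : S.card ≤ t) :
    ((b.powersetCard t).filter (fun T => S ⊆ T)).card = (b.card - S.card).choose (t - S.card) := by
  classical
  rw [← Finset.card_sdiff_of_subset hS, ← Finset.card_powersetCard (t - S.card) (b \ S)]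
  apply Finset.card_bij (fun T _ => T \ S)
  · intro T hT
    simp only [Finset.mem_filter, Finset.mem_powersetCard] at hT
    simp only [Finset.mem_powersetCard]
    exact ⟨Finset.sdiff_subset_sdiff hT.1.1 le_rfl, by rw [Finset.card_sdiff_of_subset hT.2, hT.1.2]⟩
  · intro T₁ h₁ T₂ h₂ h
    simp only [Finset.mem_filter, Finset.mem_powersetCard] at h₁ h₂
    rw [← Finset.sdiff_union_of_subset h₁.2, ← Finset.sdiff_union_of_subset h₂.2, h]
  · intro U hU
    simp only [Finset.mem_powersetCard] at hU
    have hdisj : Disjoint U S := (Finset.sdiff_disjoint.mono_left hU.1)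
    refine ⟨U ∪ S, ?_, ?_⟩
    · simp only [Finset.mem_filter, Finset.mem_powersetCard]
      refine ⟨⟨Finset.union_subset (hU.1.trans (Finset.sdiff_subset)) hS, ?_⟩,
        Finset.subset_union_right⟩
      rw [Finset.card_union_of_disjoint hdisj, hU.2]
      omega
    · rw [Finset.union_sdiff_right, Finset.sdiff_eq_self_of_disjoint hdisj]

lemma lambda_count {X : Type*} [Fintype X] [DecidableEq X]
    (v k t lam : ℕ) (B : Finset (Finset X))
    (hv : Fintype.card X = v)
    (hblocks : ∀ b ∈ B, b.card = k)
    (hdesign : ∀ S : Finset X, S.card = t → (B.filter (fun b => S ⊆ b)).card = lam)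
    (s : ℕ) (hs : s ≤ t) (htk : t ≤ k) (S : Finset X) (hS : S.card = s) :
    (B.filter (fun b => S ⊆ b)).card * (k - s).choose (t - s)
      = lam * (v - s).choose (t - s) := by
  classical
  set A := (Finset.univ.powersetCard t).filter (fun T => S ⊆ T) with hA
  have hsum : ∑ T ∈ A, (B.filter (fun b => T ⊆ b)).card = A.card * lam := by
    rw [Finset.sum_congr rfl (fun T hT => ?_), Finset.sum_const, smul_eq_mul]
    simp only [hA, Finset.mem_filter, Finset.mem_powersetCard] at hT
    exact hdesign T hT.1.2
  have hAcard : A.card = (v - s).choose (t - s) := by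
    rw [hA, count_supersets _ _ (Finset.subset_univ S) t (hS ▸ hs), Finset.card_univ, hv, hS]
  have hswap : ∑ T ∈ A, (B.filter (fun b => T ⊆ b)).card
      = ∑ b ∈ B, ((A.filter (fun T => T ⊆ b)).card) := by
    simp_rw [Finset.card_filter]
    rw [Finset.sum_comm]
  have hinner : ∀ b ∈ B, (A.filter (fun T => T ⊆ b)).card
      = if S ⊆ b then (k - s).choose (t - s) else 0 := by
    intro b hb
    have : A.filter (fun T => T ⊆ b) = (b.powersetCard t).filter (fun T => S ⊆ T) := by
      ext T
      simp only [hA, Finset.mem_filter, Finset.mem_powersetCard, Finset.subset_univ]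
      tauto
    rw [this]
    by_cases h : S ⊆ b
    · rw [if_pos h, count_supersets b S h t (hS ▸ hs), hblocks b hb, hS]
    · rw [if_neg h, Finset.card_eq_zero, Finset.filter_eq_empty_iff]
      intro T hT hST
      exact h (hST.trans (Finset.mem_powersetCard.1 hT).1)
  have : ∑ b ∈ B, ((A.filter (fun T => T ⊆ b)).card)
      = (B.filter (fun b => S ⊆ b)).card * (k - s).choose (t - s) := by
    rw [Finset.sum_congr rfl hinner, ← Finset.sum_filter, Finset.sum_const,
      smul_eq_mul]
  rw [← this, ← hswap, hsum, hAcard, Nat.mul_comm]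

lemma inter_const {X : Type*} [Fintype X] [DecidableEq X]
    (B : Finset (Finset X)) (G : Subgroup (Equiv.Perm X))
    (hflagtrans : ∀ x₁ : X, ∀ b₁ ∈ B, x₁ ∈ b₁ → ∀ x₂ : X, ∀ b₂ ∈ B, x₂ ∈ b₂ →
      ∃ g ∈ G, g x₁ = x₂ ∧ b₁.image g = b₂)
    (x : X) (Δ : Finset X)
    (hΔ : ∀ g : Equiv.Perm X, g ∈ G → g x = x → Δ.image g = Δ)
    (b b' : Finset X) (hb : b ∈ B) (hb' : b' ∈ B) (hx : x ∈ b) (hx' : x ∈ b') :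
    (b ∩ Δ).card = (b' ∩ Δ).card := by
  obtain ⟨g, hg, hgx, hgb⟩ := hflagtrans x b hb hx x b' hb' hx'
  have : (b ∩ Δ).image g = b' ∩ Δ := by
    rw [Finset.image_inter _ _ g.injective, hgb, hΔ g hg hgx]
  rw [← this, Finset.card_image_of_injective _ g.injective]

lemma count_orbit {X : Type*} [Fintype X] [DecidableEq X]
    (B : Finset (Finset X)) (G : Subgroup (Equiv.Perm X))
    (hflagtrans : ∀ x₁ : X, ∀ b₁ ∈ B, x₁ ∈ b₁ → ∀ x₂ : X, ∀ b₂ ∈ B, x₂ ∈ b₂ →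
      ∃ g ∈ G, g x₁ = x₂ ∧ b₁.image g = b₂)
    (l2 l3 : ℕ)
    (hl2 : ∀ S : Finset X, S.card = 2 → (B.filter (fun b => S ⊆ b)).card = l2)
    (hl3 : ∀ S : Finset X, S.card = 3 → (B.filter (fun b => S ⊆ b)).card = l3)
    (x y : X) (hxy : y ≠ x) (Δ : Finset X) (hxΔ : x ∉ Δ)
    (hΔ : ∀ g : Equiv.Perm X, g ∈ G → g x = x → Δ.image g = Δ)
    (d : ℕ) (hd : ∀ b ∈ B, x ∈ b → (b ∩ Δ).card = d) :
    l2 * (if y ∈ Δ then d - 1 else d) = l3 * (if y ∈ Δ then Δ.card - 1 else Δ.card) := by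
  classical
  set B2 := B.filter (fun b => x ∈ b ∧ y ∈ b) with hB2
  have hB2card : B2.card = l2 := by
    have : B2 = B.filter (fun b => ({x, y} : Finset X) ⊆ b) := by
      apply Finset.filter_congr
      intro b _
      simp [Finset.insert_subset_iff]
    rw [this, hl2]
    rw [Finset.card_insert_of_notMem (by simpa using hxy.symm), Finset.card_singleton]
  set E := Δ.erase y with hE
  have key : ∑ b ∈ B2, (b ∩ E).card = ∑ b ∈ B2, (b ∩ E).card := rfl
  -- way 1: each term equals (if y ∈ Δ then d - 1 else d)
  have hterm : ∀ b ∈ B2, (b ∩ E).card = (if y ∈ Δ then d - 1 else d) := by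
    intro b hb
    simp only [hB2, Finset.mem_filter] at hb
    have hbd : (b ∩ Δ).card = d := hd b hb.1 hb.2.1
    have : b ∩ E = (b ∩ Δ).erase y := by
      rw [hE]
      ext z
      simp only [Finset.mem_inter, Finset.mem_erase]
      tauto
    rw [this]
    by_cases hyΔ : y ∈ Δ
    · rw [if_pos hyΔ, Finset.card_erase_of_mem (Finset.mem_inter.2 ⟨hb.2.2, hyΔ⟩), hbd]
    · rw [if_neg hyΔ, Finset.erase_eq_of_notMem (fun h => hyΔ (Finset.mem_inter.1 h).2), hbd]
  have way1 : ∑ b ∈ B2, (b ∩ E).card = l2 * (if y ∈ Δ then d - 1 else d) := by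
    rw [Finset.sum_congr rfl hterm, Finset.sum_const, smul_eq_mul, hB2card]
  -- way 2
  have hswap : ∑ b ∈ B2, (b ∩ E).card = ∑ z ∈ E, (B2.filter (fun b => z ∈ b)).card := by
    simp_rw [Finset.card_filter, ← Finset.card_filter]
    have : ∀ b ∈ B2, (b ∩ E).card = ∑ z ∈ E, if z ∈ b then 1 else 0 := by
      intro b _
      rw [← Finset.sum_filter, Finset.sum_const, smul_eq_mul, mul_one]
      congr 1
      ext z
      simp only [Finset.mem_inter, Finset.mem_filter]
      tauto
    rw [Finset.sum_congr rfl this, Finset.sum_comm]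
    apply Finset.sum_congr rfl
    intro z _
    rw [Finset.card_filter]
  have hinner : ∀ z ∈ E, (B2.filter (fun b => z ∈ b)).card = l3 := by
    intro z hz
    have hzy : z ≠ y := (Finset.mem_erase.1 hz).1
    have hzΔ : z ∈ Δ := (Finset.mem_erase.1 hz).2
    have hzx : z ≠ x := fun h => hxΔ (h ▸ hzΔ)
    have : B2.filter (fun b => z ∈ b) = B.filter (fun b => ({x, y, z} : Finset X) ⊆ b) := by
      rw [hB2, Finset.filter_filter]
      apply Finset.filter_congr
      intro b _
      simp [Finset.insert_subset_iff]
      tauto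
    rw [this, hl3]
    rw [Finset.card_insert_of_notMem (by simp [hxy.symm, hzx.symm]),
      Finset.card_insert_of_notMem (by simpa using hzy.symm), Finset.card_singleton]
  have way2 : ∑ z ∈ E, (B2.filter (fun b => z ∈ b)).card
      = (if y ∈ Δ then Δ.card - 1 else Δ.card) * l3 := by
    rw [Finset.sum_congr rfl hinner, Finset.sum_const, smul_eq_mul, hE]
    by_cases hyΔ : y ∈ Δ
    · rw [if_pos hyΔ, Finset.card_erase_of_mem hyΔ]
    · rw [if_neg hyΔ, Finset.erase_eq_of_notMem hyΔ]
  rw [← way1, hswap, way2, Nat.mul_comm]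


/-- Let `D = (X, B)` be a `t`-`(v, k, λ)` design with `t ≥ 3` and
`t < k < v`. If a group `G` of automorphisms of `D` acts transitively on the flags
of `D`, then `G` acts `2`-transitively on the points of `D`. -/
theorem stmt_9 (X : Type*) [Fintype X] [DecidableEq X]
    (v k t lam : ℕ) (B : Finset (Finset X))
    (hv : Fintype.card X = v) (ht : 3 ≤ t) (htk : t < k) (hkv : k < v) (hlam : 1 ≤ lam)
    (hblocks : ∀ b ∈ B, b.card = k)
    (hdesign : ∀ S : Finset X, S.card = t → (B.filter (fun b => S ⊆ b)).card = lam)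
    (G : Subgroup (Equiv.Perm X))
    (hAut : ∀ g ∈ G, ∀ b ∈ B, b.image g ∈ B)
    (hflagtrans : ∀ x₁ : X, ∀ b₁ ∈ B, x₁ ∈ b₁ → ∀ x₂ : X, ∀ b₂ ∈ B, x₂ ∈ b₂ →
      ∃ g ∈ G, g x₁ = x₂ ∧ b₁.image g = b₂) :
    ∀ x₁ y₁ x₂ y₂ : X, x₁ ≠ y₁ → x₂ ≠ y₂ →
      ∃ g ∈ G, g x₁ = x₂ ∧ g y₁ = y₂ := by
  classical
  intro x₁ y₁ x₂ y₂ hne1 hne2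
  have htk' : t ≤ k := le_of_lt htk
  have hv5 : 5 ≤ v := by omega
  have hc2pos : 0 < (k - 2).choose (t - 2) := Nat.choose_pos (by omega)
  have hc3pos : 0 < (k - 3).choose (t - 3) := Nat.choose_pos (by omega)
  -- the constants λ₂ and λ₃
  set l2 := (B.filter (fun b => ({x₂, y₂} : Finset X) ⊆ b)).card with hl2def
  have hcard22 : ({x₂, y₂} : Finset X).card = 2 := by
    rw [Finset.card_insert_of_notMem (by simpa using hne2), Finset.card_singleton]
  have hl2 : ∀ S : Finset X, S.card = 2 → (B.filter (fun b => S ⊆ b)).card = l2 := by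
    intro S hS
    have e1 := lambda_count v k t lam B hv hblocks hdesign 2 (by omega) htk' S hS
    have e2 := lambda_count v k t lam B hv hblocks hdesign 2 (by omega) htk' _ hcard22
    exact Nat.eq_of_mul_eq_mul_right hc2pos (by rw [e1, ← e2])
  obtain ⟨S3, -, hS3⟩ := Finset.exists_subset_card_eq (s := (Finset.univ : Finset X)) (n := 3)
    (by rw [Finset.card_univ, hv]; omega)
  set l3 := (B.filter (fun b => S3 ⊆ b)).card with hl3def
  have hl3 : ∀ S : Finset X, S.card = 3 → (B.filter (fun b => S ⊆ b)).card = l3 := by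
    intro S hS
    have e1 := lambda_count v k t lam B hv hblocks hdesign 3 (by omega) htk' S hS
    have e2 := lambda_count v k t lam B hv hblocks hdesign 3 (by omega) htk' S3 hS3
    exact Nat.eq_of_mul_eq_mul_right hc3pos (by rw [e1, ← e2])
  have e2 := lambda_count v k t lam B hv hblocks hdesign 2 (by omega) htk' _ hcard22
  have e3 := lambda_count v k t lam B hv hblocks hdesign 3 (by omega) htk' S3 hS3
  rw [← hl2def] at e2
  rw [← hl3def] at e3
  -- key identity : l2 * (k-2) = l3 * (v-2)
  have hk2 : k - 2 = (k - 3) + 1 := by omega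
  have hv2 : v - 2 = (v - 3) + 1 := by omega
  have ht2 : t - 2 = (t - 3) + 1 := by omega
  have key : l2 * (k - 2) = l3 * (v - 2) := by
    have h2' : l2 * ((k - 2).choose (t - 2) * (t - 2)) =
        lam * ((v - 2).choose (t - 2) * (t - 2)) := by
      rw [← Nat.mul_assoc, ← Nat.mul_assoc, e2]
    rw [hk2, hv2, ht2, ← Nat.add_one_mul_choose_eq, ← Nat.add_one_mul_choose_eq] at h2'
    have h2'' : l2 * ((k - 3) + 1) * (k - 3).choose (t - 3) =
        ((v - 3) + 1) * (l3 * (k - 3).choose (t - 3)) := by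
      rw [e3]
      ring_nf
      ring_nf at h2'
      linarith [h2']
    have := Nat.eq_of_mul_eq_mul_right hc3pos
      (show l2 * ((k - 3) + 1) * (k - 3).choose (t - 3)
          = ((v - 3) + 1) * l3 * (k - 3).choose (t - 3) by rw [h2'']; ring)
    rw [hk2, hv2, this]; ring
  have hl3pos : 1 ≤ l3 := by
    rcases Nat.eq_zero_or_pos l3 with h | h
    · exfalso
      have : lam * (v - 3).choose (t - 3) = 0 := by rw [← e3, h, Nat.zero_mul]
      have hp : 0 < (v - 3).choose (t - 3) := Nat.choose_pos (by omega)
      have := Nat.mul_pos (by omega : 0 < lam) hp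
      omega
    · exact h
  have hl2pos : 1 ≤ l2 := by
    rcases Nat.eq_zero_or_pos l2 with h | h
    · exfalso
      have := key
      rw [h, Nat.zero_mul] at this
      have := Nat.mul_pos (by omega : 0 < l3) (by omega : 0 < v - 2)
      omega
    · exact h
  -- the stabilizer of a point is transitive on the remaining points
  have step : ∀ x y z : X, y ≠ x → z ≠ x →
      ∃ g : Equiv.Perm X, g ∈ G ∧ g x = x ∧ g y = z := by
    intro x y z hy hz
    by_contra hcon
    push_neg at hcon
    set Δ := Finset.univ.filter (fun w => ∃ g : Equiv.Perm X, g ∈ G ∧ g x = x ∧ g y = w)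
      with hΔdef
    have hmem : ∀ w, w ∈ Δ ↔ ∃ g : Equiv.Perm X, g ∈ G ∧ g x = x ∧ g y = w := by
      intro w; simp [hΔdef]
    have hyΔ : y ∈ Δ := (hmem y).2 ⟨1, one_mem G, rfl, rfl⟩
    have hzΔ : z ∉ Δ := by
      intro h
      obtain ⟨g, hg, hgx, hgy⟩ := (hmem z).1 h
      exact hcon g hg hgx hgy
    have hxΔ : x ∉ Δ := by
      intro h
      obtain ⟨g, hg, hgx, hgy⟩ := (hmem x).1 h
      exact hy (g.injective (hgy.trans hgx.symm))
    have hΔinv : ∀ g : Equiv.Perm X, g ∈ G → g x = x → Δ.image g = Δ := by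
      intro g hg hgx
      have hsub : Δ.image g ⊆ Δ := by
        intro w hw
        obtain ⟨u, hu, hgu⟩ := Finset.mem_image.1 hw
        obtain ⟨h, hh, hhx, hhy⟩ := (hmem u).1 hu
        refine (hmem w).2 ⟨g * h, mul_mem hg hh, ?_, ?_⟩
        · simp [Equiv.Perm.mul_apply, hhx, hgx]
        · simp [Equiv.Perm.mul_apply, hhy, hgu]
      exact Finset.eq_of_subset_of_card_le hsub
        (le_of_eq (Finset.card_image_of_injective _ g.injective).symm)
    -- a block through x and y
    have hcardxy : ({x, y} : Finset X).card = 2 := by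
      rw [Finset.card_insert_of_notMem (by simpa using fun h => hy h.symm),
        Finset.card_singleton]
    have hbex : (B.filter (fun b => ({x, y} : Finset X) ⊆ b)).Nonempty := by
      rw [← Finset.card_pos, hl2 _ hcardxy]; omega
    obtain ⟨b₀, hb₀⟩ := hbex
    rw [Finset.mem_filter, Finset.insert_subset_iff, Finset.singleton_subset_iff] at hb₀
    obtain ⟨hb₀B, hxb₀, hyb₀⟩ := hb₀
    set d := (b₀ ∩ Δ).card with hddef
    have hd : ∀ b ∈ B, x ∈ b → (b ∩ Δ).card = d :=
      fun b hb hxb => inter_const B G hflagtrans x Δ hΔinv b b₀ hb hb₀B hxb hxb₀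
    have hdpos : 1 ≤ d :=
      Finset.card_pos.2 ⟨y, Finset.mem_inter.2 ⟨hyb₀, hyΔ⟩⟩
    have hDpos : 1 ≤ Δ.card := Finset.card_pos.2 ⟨y, hyΔ⟩
    have eq1 := count_orbit B G hflagtrans l2 l3 hl2 hl3 x y hy Δ hxΔ hΔinv d hd
    have eq2 := count_orbit B G hflagtrans l2 l3 hl2 hl3 x z hz Δ hxΔ hΔinv d hd
    rw [if_pos hyΔ, if_pos hyΔ] at eq1
    rw [if_neg hzΔ, if_neg hzΔ] at eq2
    have hl23 : l2 = l3 := by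
      have hd' : d = (d - 1) + 1 := by omega
      have hD' : Δ.card = (Δ.card - 1) + 1 := by omega
      rw [hd', hD'] at eq2
      rw [Nat.mul_add, Nat.mul_add, eq1, Nat.mul_one, Nat.mul_one] at eq2
      omega
    rw [hl23] at key
    have : k - 2 = v - 2 := Nat.eq_of_mul_eq_mul_left (by omega) key
    omega
  -- assemble
  have hcard11 : ({x₁, y₁} : Finset X).card = 2 := by
    rw [Finset.card_insert_of_notMem (by simpa using hne1), Finset.card_singleton]
  have hb1ex : (B.filter (fun b => ({x₁, y₁} : Finset X) ⊆ b)).Nonempty := by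
    rw [← Finset.card_pos, hl2 _ hcard11]; omega
  have hb2ex : (B.filter (fun b => ({x₂, y₂} : Finset X) ⊆ b)).Nonempty := by
    rw [← Finset.card_pos, hl2 _ hcard22]; omega
  obtain ⟨b₁, hb₁⟩ := hb1ex
  obtain ⟨b₂, hb₂⟩ := hb2ex
  rw [Finset.mem_filter, Finset.insert_subset_iff, Finset.singleton_subset_iff] at hb₁ hb₂
  obtain ⟨g, hg, hgx, hgb⟩ := hflagtrans x₁ b₁ hb₁.1 hb₁.2.1 x₂ b₂ hb₂.1 hb₂.2.1
  have hy' : g y₁ ≠ x₂ := by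
    intro h
    exact hne1 (g.injective (hgx.trans h.symm))
  obtain ⟨h, hh, hhx, hhy⟩ := step x₂ (g y₁) y₂ hy' (fun h => hne2 h.symm)
  refine ⟨h * g, mul_mem hh hg, ?_, ?_⟩
  · simp [Equiv.Perm.mul_apply, hgx, hhx]
  · simp [Equiv.Perm.mul_apply, hhy]
end

section
/- (Cameron & Praeger 1993) Let D = (X,B) be a t-(v,k,λ) design with t ≥ 2 and k + t ≤ v. If a group G of automorphisms of D acts transitively on the blocks of D, then G acts transitively on the ⌊t/2⌋-element subsets of X. -/
open Finset

lemma aux_interval {X : Type*} [DecidableEq X] (S b : Finset X) (hSb : S ⊆ b) (n : ℕ)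
    (hn : S.card ≤ n) :
    ((b.powersetCard n).filter (fun T => S ⊆ T)).card
      = (b.card - S.card).choose (n - S.card) := by
  rw [← card_sdiff_of_subset hSb, ← Finset.card_powersetCard]
  apply Finset.card_nbij' (fun T => T \ S) (fun U => S ∪ U)
  · intro T hT
    simp only [mem_coe, mem_filter, mem_powersetCard] at hT
    obtain ⟨⟨hTb, hTc⟩, hST⟩ := hT
    simp only [mem_coe, mem_powersetCard]
    exact ⟨sdiff_subset_sdiff hTb (le_refl S), by rw [card_sdiff_of_subset hST, hTc]⟩
  · intro U hU
    simp only [mem_coe, mem_powersetCard] at hU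
    obtain ⟨hUb, hUc⟩ := hU
    have hdisj : Disjoint S U := (sdiff_disjoint.mono_left hUb).symm
    simp only [mem_coe, mem_filter, mem_powersetCard]
    refine ⟨⟨?_, ?_⟩, subset_union_left⟩
    · exact union_subset hSb (hUb.trans (sdiff_subset))
    · rw [card_union_of_disjoint hdisj, hUc]
      omega
  · intro T hT
    simp only [mem_coe, mem_filter, mem_powersetCard] at hT
    exact union_sdiff_of_subset hT.2
  · intro U hU
    simp only [mem_coe, mem_powersetCard] at hU
    have hdisj : Disjoint S U := (sdiff_disjoint.mono_left hU.1).symm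
    exact union_sdiff_cancel_left hdisj

lemma aux_count {X : Type*} [Fintype X] [DecidableEq X] (v k t lam : ℕ)
    (B : Finset (Finset X)) (hv : Fintype.card X = v)
    (hblocks : ∀ b ∈ B, b.card = k)
    (hdesign : ∀ S : Finset X, S.card = t → (B.filter (fun b => S ⊆ b)).card = lam)
    (m : ℕ) (hm : m ≤ t) (S : Finset X) (hS : S.card = m) :
    (B.filter (fun b => S ⊆ b)).card * (k - m).choose (t - m)
      = lam * ((v - m).choose (t - m)) := by
  classical
  set 𝒯 : Finset (Finset X) := ((Finset.univ : Finset X).powersetCard t).filter (fun T => S ⊆ T)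
    with h𝒯
  have hswap : ∑ b ∈ B.filter (fun b => S ⊆ b), ∑ T ∈ 𝒯, (if T ⊆ b then 1 else 0)
      = ∑ T ∈ 𝒯, ∑ b ∈ B.filter (fun b => S ⊆ b), (if T ⊆ b then 1 else 0) :=
    Finset.sum_comm
  have hL : ∀ b ∈ B.filter (fun b => S ⊆ b),
      (∑ T ∈ 𝒯, if T ⊆ b then 1 else 0) = (k - m).choose (t - m) := by
    intro b hb
    rw [Finset.mem_filter] at hb
    rw [← Finset.card_filter]
    have he : 𝒯.filter (fun T => T ⊆ b) = (b.powersetCard t).filter (fun T => S ⊆ T) := by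
      ext T
      simp only [h𝒯, Finset.mem_filter, Finset.mem_powersetCard, Finset.subset_univ,
        true_and]
      tauto
    rw [he, aux_interval S b hb.2 t (by omega), hblocks b hb.1, hS]
  have hR : ∀ T ∈ 𝒯, (∑ b ∈ B.filter (fun b => S ⊆ b), if T ⊆ b then 1 else 0) = lam := by
    intro T hT
    rw [h𝒯, Finset.mem_filter, Finset.mem_powersetCard] at hT
    rw [← Finset.card_filter]
    have he : (B.filter (fun b => S ⊆ b)).filter (fun b => T ⊆ b)
        = B.filter (fun b => T ⊆ b) := by
      rw [Finset.filter_filter]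
      exact Finset.filter_congr (fun b _ => by
        constructor
        · exact fun h => h.2
        · exact fun h => ⟨hT.2.trans h, h⟩)
    rw [he]
    exact hdesign T hT.1.2
  have hcard𝒯 : 𝒯.card = (v - m).choose (t - m) := by
    have := aux_interval S (Finset.univ : Finset X) (Finset.subset_univ S) t (by omega)
    rw [Finset.card_univ, hv, hS] at this
    exact this
  calc (B.filter (fun b => S ⊆ b)).card * (k - m).choose (t - m)
      = ∑ b ∈ B.filter (fun b => S ⊆ b), (k - m).choose (t - m) := by
        rw [Finset.sum_const, smul_eq_mul]
    _ = ∑ b ∈ B.filter (fun b => S ⊆ b), ∑ T ∈ 𝒯, (if T ⊆ b then 1 else 0) :=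
        (Finset.sum_congr rfl hL).symm
    _ = ∑ T ∈ 𝒯, ∑ b ∈ B.filter (fun b => S ⊆ b), (if T ⊆ b then 1 else 0) := hswap
    _ = ∑ T ∈ 𝒯, lam := Finset.sum_congr rfl hR
    _ = lam * ((v - m).choose (t - m)) := by
        rw [Finset.sum_const, smul_eq_mul, hcard𝒯, Nat.mul_comm]

lemma aux_vdm (a s : ℕ) : ∀ i, i ≤ s → ∀ c,
    (a + i).choose (c + i) = ∑ j ∈ Finset.range (s+1), i.choose j * a.choose (c + j) := by
  intro i
  induction i with
  | zero =>
    intro _ c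
    rw [Finset.sum_eq_single 0]
    · simp
    · intro j _ hj
      rw [Nat.choose_eq_zero_of_lt (Nat.pos_of_ne_zero hj), Nat.zero_mul]
    · intro h; exact absurd (Finset.mem_range.2 (Nat.succ_pos s)) h
  | succ i ih =>
    intro hi c
    have hi' : i ≤ s := by omega
    have hlt : i < s := by omega
    have e1 : ∑ j ∈ Finset.range (s+1), (i+1).choose j * a.choose (c + j)
        = (∑ j ∈ Finset.range s, (i.choose j + i.choose (j+1)) * a.choose (c + (j+1)))
          + (i+1).choose 0 * a.choose (c + 0) := by
      rw [Finset.sum_range_succ']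
      congr 1
    have e2 : ∑ j ∈ Finset.range s, (i.choose j + i.choose (j+1)) * a.choose (c + (j+1))
        = (∑ j ∈ Finset.range s, i.choose j * a.choose (c + (j+1)))
          + ∑ j ∈ Finset.range s, i.choose (j+1) * a.choose (c + (j+1)) := by
      rw [← Finset.sum_add_distrib]
      exact Finset.sum_congr rfl fun j _ => by rw [Nat.add_mul]
    have e3 : (∑ j ∈ Finset.range s, i.choose (j+1) * a.choose (c + (j+1)))
          + (i+1).choose 0 * a.choose (c + 0)
        = ∑ j ∈ Finset.range (s+1), i.choose j * a.choose (c + j) := by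
      rw [Finset.sum_range_succ']
      simp
    have e4 : ∑ j ∈ Finset.range s, i.choose j * a.choose (c + (j+1))
        = ∑ j ∈ Finset.range (s+1), i.choose j * a.choose ((c+1) + j) := by
      rw [Finset.sum_range_succ, Nat.choose_eq_zero_of_lt hlt, Nat.zero_mul, Nat.add_zero]
      exact Finset.sum_congr rfl fun j _ => by ring_nf
    calc (a + (i+1)).choose (c + (i+1))
        = (a + i).choose (c + i) + (a + i).choose ((c+1) + i) := by
          have : a + (i+1) = (a+i) + 1 := by ring
          have h2 : c + (i+1) = (c+i) + 1 := by ring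
          have h3 : (c+1) + i = c + i + 1 := by ring
          rw [this, h2, h3, Nat.choose_succ_succ]
      _ = (∑ j ∈ Finset.range (s+1), i.choose j * a.choose (c + j))
          + ∑ j ∈ Finset.range (s+1), i.choose j * a.choose ((c+1) + j) := by
          rw [ih hi' c, ih hi' (c+1)]
      _ = ∑ j ∈ Finset.range (s+1), (i+1).choose j * a.choose (c + j) := by
          rw [e1, e2]
          omega


set_option maxHeartbeats 2000000 in
/-- **Cameron & Praeger 1993.** Let `D = (X, B)` be a
`t`-`(v, k, λ)` design with `t ≥ 2` and `k + t ≤ v`. If a group `G` of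
automorphisms of `D` acts transitively on the blocks of `D`, then `G` acts
transitively on the `⌊t/2⌋`-element subsets of `X`. -/
theorem stmt_10 (X : Type*) [Fintype X] [DecidableEq X]
    (v k t lam : ℕ) (B : Finset (Finset X))
    (hv : Fintype.card X = v) (ht : 2 ≤ t) (htk : t ≤ k) (hkv : k + t ≤ v) (hlam : 1 ≤ lam)
    (hblocks : ∀ b ∈ B, b.card = k)
    (hdesign : ∀ S : Finset X, S.card = t → (B.filter (fun b => S ⊆ b)).card = lam)
    (G : Subgroup (Equiv.Perm X))
    (hAut : ∀ g ∈ G, ∀ b ∈ B, b.image g ∈ B)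
    (hblocktrans : ∀ b₁ ∈ B, ∀ b₂ ∈ B, ∃ g ∈ G, b₁.image g = b₂) :
    ∀ S T : Finset X, S.card = t / 2 → T.card = t / 2 →
      ∃ g ∈ G, S.image g = T := by
  classical
  intro S T hS hT
  by_contra hST
  set s := t / 2 with hs
  have h2st : 2 * s ≤ t := by omega
  have htv : t ≤ v := by omega
  have hsk : s ≤ k := by omega
  have hvX : (Finset.univ : Finset X).card = v := by rw [Finset.card_univ, hv]
  set A : Finset (Finset X) := (Finset.univ : Finset X).powersetCard s with hA
  have hmemA : ∀ U : Finset X, U ∈ A ↔ U.card = s := by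
    intro U
    simp [hA, Finset.mem_powersetCard]
  -- orbit predicate
  set orb : Finset X → Finset X → Prop := fun S0 U => ∃ g ∈ G, S0.image g = U with horb
  have hinv : ∀ (g : Equiv.Perm X) (U : Finset X), (U.image g).image (g⁻¹ : Equiv.Perm X) = U := by
    intro g U
    rw [Finset.image_image]
    have hc : ((g⁻¹ : Equiv.Perm X) : X → X) ∘ (g : X → X) = id := by
      funext a
      simp
    rw [hc, Finset.image_id]
  have horbtrans : ∀ (S0 U : Finset X) (g : Equiv.Perm X), g ∈ G → orb S0 U →
      orb S0 (U.image g) := by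
    rintro S0 U g hg ⟨h, hh, rfl⟩
    refine ⟨g * h, mul_mem hg hh, ?_⟩
    rw [Finset.image_image]
    rfl
  -- counting functions
  set cnt : Finset X → Finset X → ℕ :=
    fun S0 b => (A.filter (fun U => orb S0 U ∧ U ⊆ b)).card with hcnt
  have hconst : ∀ (S0 : Finset X), ∀ b₁ ∈ B, ∀ b₂ ∈ B, cnt S0 b₁ = cnt S0 b₂ := by
    intro S0 b₁ hb₁ b₂ hb₂
    obtain ⟨g, hg, hgb⟩ := hblocktrans b₁ hb₁ b₂ hb₂
    have hb₂b₁ : b₂.image (g⁻¹ : Equiv.Perm X) = b₁ := by rw [← hgb, hinv]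
    apply Finset.card_nbij' (fun U => U.image g) (fun W => W.image (g⁻¹ : Equiv.Perm X))
    · intro U hU
      rw [Finset.mem_coe, Finset.mem_filter] at hU ⊢
      obtain ⟨hUA, hUo, hUb⟩ := hU
      refine ⟨?_, horbtrans S0 U g hg hUo, ?_⟩
      · rw [hmemA] at hUA ⊢
        rw [Finset.card_image_of_injective U g.injective, hUA]
      · calc U.image g ⊆ b₁.image g := Finset.image_subset_image hUb
          _ = b₂ := hgb
    · intro W hW
      rw [Finset.mem_coe, Finset.mem_filter] at hW ⊢
      obtain ⟨hWA, hWo, hWb⟩ := hW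
      refine ⟨?_, horbtrans S0 W _ (inv_mem hg) hWo, ?_⟩
      · rw [hmemA] at hWA ⊢
        rw [Finset.card_image_of_injective W (g⁻¹ : Equiv.Perm X).injective, hWA]
      · calc W.image (g⁻¹ : Equiv.Perm X) ⊆ b₂.image (g⁻¹ : Equiv.Perm X) :=
            Finset.image_subset_image hWb
          _ = b₁ := hb₂b₁
    · intro U _; exact hinv g U
    · intro W _
      have := hinv (g⁻¹ : Equiv.Perm X) W
      rw [inv_inv] at this
      exact this
  -- B is nonempty
  have hBne : B.Nonempty := by
    obtain ⟨T₀, _, hT₀c⟩ := Finset.exists_subset_card_eq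
      (show t ≤ (Finset.univ : Finset X).card by omega)
    have hd := hdesign T₀ hT₀c
    have hpos : 0 < (B.filter (fun b => T₀ ⊆ b)).card := by omega
    obtain ⟨b, hb⟩ := Finset.card_pos.1 hpos
    exact ⟨b, (Finset.mem_filter.1 hb).1⟩
  obtain ⟨b₀, hb₀⟩ := hBne
  -- positivity of orbit counts
  have hposc : ∀ S0 : Finset X, S0.card = s → 0 < cnt S0 b₀ := by
    intro S0 hS0
    have hcount := aux_count v k t lam B hv hblocks hdesign s (by omega) S0 hS0
    have hchp : 0 < (v - s).choose (t - s) := Nat.choose_pos (by omega)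
    have hfs : 0 < (B.filter (fun b => S0 ⊆ b)).card := by
      rcases Nat.eq_zero_or_pos (B.filter (fun b => S0 ⊆ b)).card with h | h
      · rw [h, Nat.zero_mul] at hcount
        have : 0 < lam * (v - s).choose (t - s) := Nat.mul_pos (by omega) hchp
        omega
      · exact h
    obtain ⟨b₁, hb₁⟩ := Finset.card_pos.1 hfs
    rw [Finset.mem_filter] at hb₁
    obtain ⟨g, hg, hgb⟩ := hblocktrans b₁ hb₁.1 b₀ hb₀
    apply Finset.card_pos.2
    refine ⟨S0.image g, ?_⟩
    rw [Finset.mem_filter]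
    refine ⟨?_, ⟨g, hg, rfl⟩, ?_⟩
    · rw [hmemA, Finset.card_image_of_injective S0 g.injective, hS0]
    · calc S0.image g ⊆ b₁.image g := Finset.image_subset_image hb₁.2
        _ = b₀ := hgb
  set cc : ℕ := cnt S b₀ with hcc
  set dd : ℕ := cnt T b₀ with hdd
  have hddpos : 0 < dd := hposc T hT
  -- the test vector
  set x : Finset X → ℚ :=
    fun U => (if orb S U then (dd : ℚ) else 0) - (if orb T U then (cc : ℚ) else 0) with hx
  have hPhi : ∀ b ∈ B, (∑ U ∈ A, if U ⊆ b then x U else 0) = 0 := by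
    intro b hb
    have hsplit : ∀ U ∈ A, (if U ⊆ b then x U else 0)
        = (if orb S U ∧ U ⊆ b then (dd : ℚ) else 0)
          - (if orb T U ∧ U ⊆ b then (cc : ℚ) else 0) := by
      intro U _
      by_cases h : U ⊆ b <;> simp [hx, h]
    rw [Finset.sum_congr rfl hsplit, Finset.sum_sub_distrib]
    have h1 : (∑ U ∈ A, if orb S U ∧ U ⊆ b then (dd : ℚ) else 0) = (cnt S b : ℚ) * dd := by
      rw [Finset.sum_ite, Finset.sum_const, Finset.sum_const_zero, add_zero, nsmul_eq_mul]
    have h2 : (∑ U ∈ A, if orb T U ∧ U ⊆ b then (cc : ℚ) else 0) = (cnt T b : ℚ) * cc := by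
      rw [Finset.sum_ite, Finset.sum_const, Finset.sum_const_zero, add_zero, nsmul_eq_mul]
    rw [h1, h2, hconst S b hb b₀ hb₀, hconst T b hb b₀ hb₀, ← hcc, ← hdd]
    ring
  have hE2 : ∀ U ∈ A, ∀ W ∈ A,
      (B.filter (fun b => U ∪ W ⊆ b)).card * (v - t).choose (k - t)
        = ∑ j ∈ Finset.range (s+1),
            (lam * (v - 2*s).choose (k - 2*s + j)) * ((U ∩ W).card.choose j) := by
    intro U hU W hW
    rw [hmemA] at hU hW
    have hile : (U ∩ W).card ≤ s := by
      calc (U ∩ W).card ≤ U.card := Finset.card_le_card Finset.inter_subset_left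
        _ = s := hU
    set i := (U ∩ W).card with hi
    have hm : (U ∪ W).card = 2*s - i := by
      have h := Finset.card_union_add_card_inter U W
      omega
    have hmt : (2*s - i) ≤ t := by omega
    have hcount := aux_count v k t lam B hv hblocks hdesign (2*s - i) hmt (U ∪ W) hm
    have hvm : v - (2*s - i) = (v - 2*s) + i := by omega
    have hkm : k - (2*s - i) = (k - 2*s) + i := by omega
    have h1 : (t - (2*s - i)) ≤ (k - (2*s - i)) := by omega
    have h2 : (k - (2*s - i)) ≤ (v - (2*s - i)) := by omega
    have hchain := Nat.choose_mul (n := v - (2*s - i)) h1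
    have h3 : (v - (2*s-i)) - (t - (2*s-i)) = v - t := by omega
    have h4 : (k - (2*s-i)) - (t - (2*s-i)) = k - t := by omega
    rw [h3, h4] at hchain
    have hvdm := aux_vdm (v - 2*s) s i hile (k - 2*s)
    have hcpos : 0 < (k - (2*s-i)).choose (t - (2*s-i)) := Nat.choose_pos (by omega)
    apply Nat.eq_of_mul_eq_mul_right hcpos
    calc (B.filter (fun b => U ∪ W ⊆ b)).card * (v - t).choose (k - t)
          * (k - (2*s-i)).choose (t - (2*s-i))
        = ((B.filter (fun b => U ∪ W ⊆ b)).card * (k - (2*s-i)).choose (t - (2*s-i)))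
          * (v - t).choose (k - t) := by ring
      _ = (lam * (v - (2*s-i)).choose (t - (2*s-i))) * (v - t).choose (k - t) := by rw [hcount]
      _ = lam * ((v - (2*s-i)).choose (t - (2*s-i)) * (v - t).choose (k - t)) := by ring
      _ = lam * ((v - (2*s-i)).choose (k - (2*s-i)) * (k - (2*s-i)).choose (t - (2*s-i))) := by
          rw [← hchain]
      _ = (lam * (v - (2*s-i)).choose (k - (2*s-i))) * (k - (2*s-i)).choose (t-(2*s-i)) := by
          ring
      _ = (∑ j ∈ Finset.range (s+1), (lam * (v - 2*s).choose (k - 2*s + j)) * (i.choose j))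
          * (k - (2*s-i)).choose (t-(2*s-i)) := by
          rw [hvm, hkm, hvdm, Finset.mul_sum]
          congr 1
          exact Finset.sum_congr rfl fun j _ => by ring
  have hQ0 : ∑ b ∈ B, (∑ U ∈ A, if U ⊆ b then x U else 0)^2 = 0 :=
    Finset.sum_eq_zero fun b hb => by rw [hPhi b hb]; norm_num
  have hE1 : ∑ b ∈ B, (∑ U ∈ A, if U ⊆ b then x U else 0)^2
      = ∑ U ∈ A, ∑ W ∈ A, x U * x W * ((B.filter (fun b => U ∪ W ⊆ b)).card : ℚ) := by
    have hstep : ∀ b : Finset X, (∑ U ∈ A, if U ⊆ b then x U else 0)^2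
        = ∑ U ∈ A, ∑ W ∈ A, (if U ∪ W ⊆ b then x U * x W else 0) := by
      intro b
      rw [sq, Finset.sum_mul_sum]
      exact Finset.sum_congr rfl fun U _ => Finset.sum_congr rfl fun W _ => by
        by_cases h1 : U ⊆ b <;> by_cases h2 : W ⊆ b <;>
          simp [Finset.union_subset_iff, h1, h2]
    calc ∑ b ∈ B, (∑ U ∈ A, if U ⊆ b then x U else 0)^2
        = ∑ b ∈ B, ∑ U ∈ A, ∑ W ∈ A, (if U ∪ W ⊆ b then x U * x W else 0) :=
          Finset.sum_congr rfl fun b _ => hstep b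
      _ = ∑ U ∈ A, ∑ b ∈ B, ∑ W ∈ A, (if U ∪ W ⊆ b then x U * x W else 0) := Finset.sum_comm
      _ = ∑ U ∈ A, ∑ W ∈ A, ∑ b ∈ B, (if U ∪ W ⊆ b then x U * x W else 0) :=
          Finset.sum_congr rfl fun U _ => Finset.sum_comm
      _ = ∑ U ∈ A, ∑ W ∈ A, x U * x W * ((B.filter (fun b => U ∪ W ⊆ b)).card : ℚ) := by
          refine Finset.sum_congr rfl fun U _ => Finset.sum_congr rfl fun W _ => ?_
          rw [Finset.sum_ite, Finset.sum_const, Finset.sum_const_zero, add_zero, nsmul_eq_mul,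
            mul_comm]
  have hsq : ∀ j : ℕ, ∑ U ∈ A, ∑ W ∈ A, x U * x W * (((U ∩ W).card.choose j : ℕ) : ℚ)
      = ∑ J ∈ (Finset.univ : Finset X).powersetCard j,
          (∑ U ∈ A, if J ⊆ U then x U else 0)^2 := by
    intro j
    have hCC : ∀ U W : Finset X, (((U ∩ W).card.choose j : ℕ) : ℚ)
        = ∑ J ∈ (Finset.univ : Finset X).powersetCard j,
            (if J ⊆ U then (1:ℚ) else 0) * (if J ⊆ W then (1:ℚ) else 0) := by
      intro U W
      have he : ((Finset.univ : Finset X).powersetCard j).filter (fun J => J ⊆ U ∩ W)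
          = (U ∩ W).powersetCard j := by
        ext J
        simp only [Finset.mem_filter, Finset.mem_powersetCard, Finset.subset_univ, true_and]
        tauto
      have h2 : ∑ J ∈ (Finset.univ : Finset X).powersetCard j,
          (if J ⊆ U then (1:ℚ) else 0) * (if J ⊆ W then (1:ℚ) else 0)
          = ∑ J ∈ (Finset.univ : Finset X).powersetCard j,
              (if J ⊆ U ∩ W then (1:ℚ) else 0) :=
        Finset.sum_congr rfl fun J _ => by
          by_cases h1 : J ⊆ U <;> by_cases h2 : J ⊆ W <;>
            simp [Finset.subset_inter_iff, h1, h2]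
      rw [h2, Finset.sum_boole, he, Finset.card_powersetCard]
    calc ∑ U ∈ A, ∑ W ∈ A, x U * x W * (((U ∩ W).card.choose j : ℕ) : ℚ)
        = ∑ U ∈ A, ∑ W ∈ A, ∑ J ∈ (Finset.univ : Finset X).powersetCard j,
            (if J ⊆ U then x U else 0) * (if J ⊆ W then x W else 0) := by
          refine Finset.sum_congr rfl fun U _ => Finset.sum_congr rfl fun W _ => ?_
          rw [hCC, Finset.mul_sum]
          exact Finset.sum_congr rfl fun J _ => by
            by_cases h1 : J ⊆ U <;> by_cases h2 : J ⊆ W <;> simp [h1, h2]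
      _ = ∑ U ∈ A, ∑ J ∈ (Finset.univ : Finset X).powersetCard j, ∑ W ∈ A,
            (if J ⊆ U then x U else 0) * (if J ⊆ W then x W else 0) :=
          Finset.sum_congr rfl fun U _ => Finset.sum_comm
      _ = ∑ J ∈ (Finset.univ : Finset X).powersetCard j, ∑ U ∈ A, ∑ W ∈ A,
            (if J ⊆ U then x U else 0) * (if J ⊆ W then x W else 0) := Finset.sum_comm
      _ = ∑ J ∈ (Finset.univ : Finset X).powersetCard j,
            (∑ U ∈ A, if J ⊆ U then x U else 0)^2 := by
          refine Finset.sum_congr rfl fun J _ => ?_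
          rw [sq, Finset.sum_mul_sum]
  have hE3 : (0:ℚ) = ∑ j ∈ Finset.range (s+1),
      ((lam * (v - 2*s).choose (k - 2*s + j) : ℕ) : ℚ)
        * ∑ J ∈ (Finset.univ : Finset X).powersetCard j,
            (∑ U ∈ A, if J ⊆ U then x U else 0)^2 := by
    have hc1 : (0:ℚ) = ∑ U ∈ A, ∑ W ∈ A, x U * x W
        * (((B.filter (fun b => U ∪ W ⊆ b)).card * (v - t).choose (k - t) : ℕ) : ℚ) := by
      have h0 : (0:ℚ) = (∑ b ∈ B, (∑ U ∈ A, if U ⊆ b then x U else 0)^2)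
          * (((v - t).choose (k - t) : ℕ) : ℚ) := by rw [hQ0]; ring
      rw [h0, hE1, Finset.sum_mul]
      refine Finset.sum_congr rfl fun U _ => ?_
      rw [Finset.sum_mul]
      refine Finset.sum_congr rfl fun W _ => ?_
      push_cast
      ring
    refine hc1.trans ?_
    calc ∑ U ∈ A, ∑ W ∈ A, x U * x W
          * (((B.filter (fun b => U ∪ W ⊆ b)).card * (v - t).choose (k - t) : ℕ) : ℚ)
        = ∑ U ∈ A, ∑ W ∈ A, ∑ j ∈ Finset.range (s+1),
            ((lam * (v - 2*s).choose (k - 2*s + j) : ℕ) : ℚ)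
              * (x U * x W * (((U ∩ W).card.choose j : ℕ) : ℚ)) := by
          refine Finset.sum_congr rfl fun U hU => Finset.sum_congr rfl fun W hW => ?_
          rw [hE2 U hU W hW]
          push_cast
          rw [Finset.mul_sum]
          exact Finset.sum_congr rfl fun j _ => by ring
      _ = ∑ j ∈ Finset.range (s+1), ∑ U ∈ A, ∑ W ∈ A,
            ((lam * (v - 2*s).choose (k - 2*s + j) : ℕ) : ℚ)
              * (x U * x W * (((U ∩ W).card.choose j : ℕ) : ℚ)) := by
          exact (Finset.sum_congr rfl fun U _ => Finset.sum_comm).trans Finset.sum_comm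
      _ = ∑ j ∈ Finset.range (s+1),
            ((lam * (v - 2*s).choose (k - 2*s + j) : ℕ) : ℚ)
              * ∑ J ∈ (Finset.univ : Finset X).powersetCard j,
                  (∑ U ∈ A, if J ⊆ U then x U else 0)^2 := by
          refine Finset.sum_congr rfl fun j _ => ?_
          rw [← hsq j, Finset.mul_sum]
          exact Finset.sum_congr rfl fun U _ => by rw [Finset.mul_sum]
  have hterm : ∀ j ∈ Finset.range (s+1),
      (0:ℚ) ≤ ((lam * (v - 2*s).choose (k - 2*s + j) : ℕ) : ℚ)
        * ∑ J ∈ (Finset.univ : Finset X).powersetCard j,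
            (∑ U ∈ A, if J ⊆ U then x U else 0)^2 :=
    fun j _ => mul_nonneg (Nat.cast_nonneg _)
      (Finset.sum_nonneg fun J _ => sq_nonneg _)
  have hall := (Finset.sum_eq_zero_iff_of_nonneg hterm).1 hE3.symm
  have hss := hall s (Finset.mem_range.2 (Nat.lt_succ_self s))
  have hγs : (0:ℕ) < lam * (v - 2*s).choose (k - 2*s + s) :=
    Nat.mul_pos (by omega) (Nat.choose_pos (by omega))
  have hyz : ∑ J ∈ A, (∑ U ∈ A, if J ⊆ U then x U else 0)^2 = 0 := by
    rcases mul_eq_zero.1 hss with h | h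
    · exact absurd (Nat.cast_eq_zero.1 h) (by omega)
    · rw [hA]
      exact h
  have hyJ := (Finset.sum_eq_zero_iff_of_nonneg (fun J _ => sq_nonneg _)).1 hyz
  have hSA : S ∈ A := (hmemA S).2 hS
  have hyS := hyJ S hSA
  have hxS : (∑ U ∈ A, if S ⊆ U then x U else 0) = x S := by
    rw [Finset.sum_eq_single_of_mem S hSA]
    · simp
    · intro U hU hne
      have hns : ¬ S ⊆ U := by
        intro hsub
        exact hne (Finset.eq_of_subset_of_card_le hsub
          (by rw [(hmemA U).1 hU, hS])).symm
      simp [hns]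
  rw [hxS] at hyS
  have hxS0 : x S = 0 := by
    have := sq_eq_zero_iff.1 hyS
    exact this
  have hxSval : x S = (dd : ℚ) := by
    have h1 : orb S S := ⟨1, one_mem G, by simp⟩
    have h2 : ¬ orb T S := by
      rintro ⟨g, hg, hgi⟩
      exact hST ⟨g⁻¹, inv_mem hg, by rw [← hgi, hinv]⟩
    simp [hx, h1, h2]
  rw [hxSval] at hxS0
  exact absurd (Nat.cast_eq_zero.1 hxS0) (by omega)
end

section
/- Let D = (X,B) be a non-trivial Steiner 6-design with exactly 32 points. Then 29 divides the number b of blocks of D; consequently, if a group G of automorphisms of D acts transitively on the blocks, then 29 divides the order of G. -/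
open Finset Pointwise

/-- Let `D = (X, B)` be a non-trivial Steiner `6`-design with
exactly `32` points. Then `29` divides the number `b` of blocks of `D`;
consequently, if a group `G` of automorphisms of `D` acts transitively on the
blocks, then `29` divides the order of `G`. -/
theorem stmt_17 (X : Type*) [Fintype X] [DecidableEq X]
    (k : ℕ) (B : Finset (Finset X))
    (hv : Fintype.card X = 32) (htk : 6 < k) (hkv : k < 32)
    (hblocks : ∀ b ∈ B, b.card = k)
    (hdesign : ∀ S : Finset X, S.card = 6 → (B.filter (fun b => S ⊆ b)).card = 1) :
    29 ∣ B.card ∧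
      ∀ G : Subgroup (Equiv.Perm X),
        (∀ g ∈ G, ∀ b ∈ B, b.image g ∈ B) →
        (∀ b₁ ∈ B, ∀ b₂ ∈ B, ∃ g ∈ G, b₁.image g = b₂) →
        29 ∣ Nat.card G := by
  have hcardu : (Finset.univ : Finset X).card = 32 := by simpa using hv
  -- Global double counting: B.card * C(k,6) = C(32,6)
  have hcount : B.card * Nat.choose k 6 = Nat.choose 32 6 := by
    have h1 : ∑ S ∈ (Finset.univ : Finset X).powersetCard 6,
        (B.filter (fun b => S ⊆ b)).card = Nat.choose 32 6 := by
      rw [Finset.sum_congr rfl (fun S hS => hdesign S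
        (Finset.mem_powersetCard.mp hS).2)]
      simp [Finset.card_powersetCard, hcardu]
    have h2 : ∑ S ∈ (Finset.univ : Finset X).powersetCard 6,
        (B.filter (fun b => S ⊆ b)).card = B.card * Nat.choose k 6 := by
      simp only [Finset.card_filter]
      rw [Finset.sum_comm]
      rw [Finset.sum_congr rfl (fun b hb => ?_), Finset.sum_const, smul_eq_mul]
      have hfb : ((Finset.univ : Finset X).powersetCard 6).filter (fun S => S ⊆ b)
          = b.powersetCard 6 := by
        ext S
        simp [Finset.mem_powersetCard, and_comm]
      calc ∑ S ∈ (Finset.univ : Finset X).powersetCard 6, (if S ⊆ b then 1 else 0)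
          = (((Finset.univ : Finset X).powersetCard 6).filter (fun S => S ⊆ b)).card := by
            rw [Finset.card_filter]
        _ = Nat.choose k 6 := by rw [hfb, Finset.card_powersetCard, hblocks b hb]
    rw [← h2, h1]
  -- A 5-point set
  obtain ⟨T, -, hT⟩ : ∃ T ⊆ (Finset.univ : Finset X), T.card = 5 :=
    Finset.exists_subset_card_eq (by omega)
  -- local counting: 27 = r * (k-5)
  have hlocal : 27 = (B.filter (fun b => T ⊆ b)).card * (k - 5) := by
    have h1 : ∑ x ∈ Finset.univ \ T,
        (B.filter (fun b => insert x T ⊆ b)).card = 27 := by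
      rw [Finset.sum_congr rfl (fun x hx => hdesign (insert x T) ?_)]
      · rw [Finset.sum_const, smul_eq_mul, mul_one, Finset.card_sdiff_of_subset (Finset.subset_univ T),
          hcardu, hT]
      · rw [Finset.card_insert_of_notMem, hT]
        exact (Finset.mem_sdiff.mp hx).2
    have h2 : ∑ x ∈ Finset.univ \ T,
        (B.filter (fun b => insert x T ⊆ b)).card
        = ∑ b ∈ B.filter (fun b => T ⊆ b), (b \ T).card := by
      simp only [Finset.card_filter]
      rw [Finset.sum_comm]
      rw [Finset.sum_filter]
      refine Finset.sum_congr rfl (fun b hb => ?_)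
      by_cases hTb : T ⊆ b
      · simp only [hTb, if_true]
        have : (Finset.univ \ T).filter (fun x => insert x T ⊆ b) = b \ T := by
          ext x
          simp only [Finset.mem_filter, Finset.mem_sdiff, Finset.mem_univ, true_and,
            Finset.insert_subset_iff]
          constructor
          · rintro ⟨hx, hxb, -⟩; exact ⟨hxb, hx⟩
          · rintro ⟨hxb, hx⟩; exact ⟨hx, hxb, hTb⟩
        rw [← Finset.card_filter, this]
      · simp only [hTb, if_false]
        refine Finset.sum_eq_zero (fun x hx => ?_)
        rw [if_neg]
        intro h
        exact hTb ((Finset.subset_insert x T).trans h)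
    have h3 : ∑ b ∈ B.filter (fun b => T ⊆ b), (b \ T).card
        = (B.filter (fun b => T ⊆ b)).card * (k - 5) := by
      rw [Finset.sum_congr rfl (fun b hb => ?_), Finset.sum_const, smul_eq_mul]
      rw [Finset.card_sdiff_of_subset (Finset.mem_filter.mp hb).2, hT,
        hblocks b (Finset.mem_filter.mp hb).1]
    rw [← h1, h2, h3]
  -- deduce k = 8 or k = 14
  have hk : k = 8 ∨ k = 14 := by interval_cases k <;> omega
  have hdvd : 29 ∣ B.card := by
    have h326 : Nat.choose 32 6 = 906192 := by decide
    rcases hk with rfl | rfl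
    · have : Nat.choose 8 6 = 28 := by decide
      rw [this, h326] at hcount; omega
    · have : Nat.choose 14 6 = 3003 := by decide
      rw [this, h326] at hcount; omega
  refine ⟨hdvd, fun G hclosed htrans => ?_⟩
  -- B is nonempty
  obtain ⟨S, -, hS6⟩ : ∃ S ⊆ (Finset.univ : Finset X), S.card = 6 :=
    Finset.exists_subset_card_eq (by omega)
  obtain ⟨b₀, hb₀⟩ := Finset.card_pos.mp (by rw [hdesign S hS6]; norm_num)
  have hb₀B : b₀ ∈ B := (Finset.mem_filter.mp hb₀).1
  -- orbit of b₀ under G (pointwise action on finsets) is B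
  have horb : MulAction.orbit G b₀ = (B : Set (Finset X)) := by
    ext b
    constructor
    · rintro ⟨g, rfl⟩
      have : (g : Equiv.Perm X) • b₀ = b₀.image (g : Equiv.Perm X) := rfl
      have h' := hclosed (g : Equiv.Perm X) g.2 b₀ hb₀B
      rw [← this] at h'
      exact h'
    · intro hb
      obtain ⟨g, hgG, hgb⟩ := htrans b₀ hb₀B b hb
      exact ⟨⟨g, hgG⟩, hgb⟩
  letI : Fintype ↥G := Fintype.ofFinite _
  letI : Fintype (MulAction.orbit (↥G) b₀) := Fintype.ofFinite _
  letI : Fintype (MulAction.stabilizer (↥G) b₀) := Fintype.ofFinite _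
  have hos := MulAction.card_orbit_mul_card_stabilizer_eq_card_group (↥G) b₀
  have hcardorb : Fintype.card (MulAction.orbit (↥G) b₀) = B.card := by
    rw [← Nat.card_eq_fintype_card, horb, Nat.card_coe_set_eq, Set.ncard_coe_finset]
  rw [Nat.card_eq_fintype_card, ← hos, hcardorb]
  exact hdvd.mul_right _
end

section
/- Let e ≥ 3 be an integer and q = 2^e. Then for every integer k ≥ 6, (q-2)(q-3)(q-4) ≠ k(k-1)(k-2)(k-3)(k-4)(k-5); indeed 16 divides the product k(k-1)(k-2)(k-3)(k-4)(k-5) of any six consecutive integers with k ≥ 6, whereas the 2-adic valuation of (q-2)(q-3)(q-4) equals exactly 3, so 16 does not divide (q-2)(q-3)(q-4). -/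
lemma six_consec_int (x : ℤ) : (16 : ℤ) ∣ x * (x-1) * (x-2) * (x-3) * (x-4) * (x-5) := by
  have h : ∀ y : ZMod 16, y * (y-1) * (y-2) * (y-3) * (y-4) * (y-5) = 0 := by decide
  have h2 : ((x * (x-1) * (x-2) * (x-3) * (x-4) * (x-5) : ℤ) : ZMod 16) = 0 := by
    push_cast; exact h (x : ZMod 16)
  exact (ZMod.intCast_zmod_eq_zero_iff_dvd _ 16).mp h2

lemma six_consec (k : ℕ) (hk : 6 ≤ k) :
    16 ∣ k * (k - 1) * (k - 2) * (k - 3) * (k - 4) * (k - 5) := by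
  have h := six_consec_int (k : ℤ)
  have hc : ((k * (k - 1) * (k - 2) * (k - 3) * (k - 4) * (k - 5) : ℕ) : ℤ)
      = (k : ℤ) * (k-1) * (k-2) * (k-3) * (k-4) * (k-5) := by
    push_cast [Nat.cast_sub (by omega : 1 ≤ k), Nat.cast_sub (by omega : 2 ≤ k),
      Nat.cast_sub (by omega : 3 ≤ k), Nat.cast_sub (by omega : 4 ≤ k),
      Nat.cast_sub (by omega : 5 ≤ k)]
    ring
  have : (16 : ℤ) ∣ ((k * (k - 1) * (k - 2) * (k - 3) * (k - 4) * (k - 5) : ℕ) : ℤ) := by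
    rw [hc]; exact h
  exact_mod_cast this

/-- Let `e ≥ 3` be an integer and `q = 2 ^ e`. Then for every
integer `k ≥ 6`, `(q-2)(q-3)(q-4) ≠ k(k-1)(k-2)(k-3)(k-4)(k-5)`; indeed `16`
divides the product `k(k-1)(k-2)(k-3)(k-4)(k-5)` of any six consecutive integers
with `k ≥ 6`, whereas the `2`-adic valuation of `(q-2)(q-3)(q-4)` equals exactly
`3`, so `16` does not divide `(q-2)(q-3)(q-4)`. -/
theorem stmt_19 (e : ℕ) (he : 3 ≤ e) (q : ℕ) (hq : q = 2 ^ e) :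
    (∀ k : ℕ, 6 ≤ k →
      (q - 2) * (q - 3) * (q - 4) ≠ k * (k - 1) * (k - 2) * (k - 3) * (k - 4) * (k - 5)) ∧
    (∀ k : ℕ, 6 ≤ k → 16 ∣ k * (k - 1) * (k - 2) * (k - 3) * (k - 4) * (k - 5)) ∧
    padicValNat 2 ((q - 2) * (q - 3) * (q - 4)) = 3 ∧
    ¬ 16 ∣ (q - 2) * (q - 3) * (q - 4) := by
  haveI : Fact (Nat.Prime 2) := ⟨Nat.prime_two⟩
  obtain ⟨a, haq, ha1⟩ : ∃ a, q = 8 * a ∧ 1 ≤ a := by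
    refine ⟨2 ^ (e - 3), ?_, Nat.one_le_two_pow⟩
    rw [hq, show (8:ℕ) = 2^3 from rfl, ← pow_add]
    congr 1
    omega
  -- decompose the product as 8 * odd
  set M := (4 * a - 1) * (q - 3) * (2 * a - 1) with hM
  have hprod : (q - 2) * (q - 3) * (q - 4) = 8 * M := by
    have h2 : q - 2 = 2 * (4 * a - 1) := by omega
    have h4 : q - 4 = 4 * (2 * a - 1) := by omega
    rw [h2, h4, hM]; ring
  have hModd : Odd M := by
    refine (Odd.mul (Odd.mul ?_ ?_) ?_) <;> [exact ⟨2*a-1, by omega⟩;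
      exact ⟨4*a-2, by omega⟩; exact ⟨a-1, by omega⟩]
  have hMnd : ¬ 2 ∣ M := by
    have := Nat.odd_iff.mp hModd; omega
  have hM0 : M ≠ 0 := by have := Nat.odd_iff.mp hModd; omega
  refine ⟨?_, fun k hk => six_consec k hk, ?_, ?_⟩
  · intro k hk heq
    have h16 : (16 : ℕ) ∣ (q - 2) * (q - 3) * (q - 4) := heq ▸ six_consec k hk
    rw [hprod] at h16
    obtain ⟨c, hc⟩ := h16
    have := Nat.odd_iff.mp hModd
    omega
  · rw [hprod, show (8 : ℕ) = 2 ^ 3 from rfl,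
      padicValNat.mul (by positivity) hM0,
      padicValNat.prime_pow, padicValNat.eq_zero_of_not_dvd hMnd]
  · rw [hprod]
    rintro ⟨c, hc⟩
    have := Nat.odd_iff.mp hModd
    omega
end
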